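/- arXiv:1406.7784 — 5 statements merged into one kernel-verified Lean document; each statement's English description precedes it below -/
import Mathlib

section
/- For n ≥ 1 and 1 ≤ k ≤ n, the number of rooted G-configurations of size n with exactly k tree vertices equals C(n,k) * k^{k-1} * (n-1)!/(k-1)!. -/
attribute [local instance] Classical.propDecidable

namespace CayleyAux

variable {W : Type*}

/-- iterate the partial function -/
def itf (f : W → Option W) (m : ℕ) (v : W) : Option W :=
  (fun o => o.bind f)^[m] (some v)

@[simp] lemma itf_zero (f : W → Option W) (v : W) : itf f 0 v = some v := rfl

lemma itf_succ' (f : W → Option W) (m : ℕ) (v : W) :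
    itf f (m + 1) v = (itf f m v).bind f := by
  simp [itf, Function.iterate_succ_apply']

lemma itf_one (f : W → Option W) (v : W) : itf f 1 v = f v := by
  simp [itf_succ']

lemma itf_succ_of_some {f : W → Option W} {v u : W} (h : f v = some u) (m : ℕ) :
    itf f (m + 1) v = itf f m u := by
  simp [itf, Function.iterate_succ_apply, h]

lemma itf_add {f : W → Option W} {v u : W} {b : ℕ} (h : itf f b v = some u) (a : ℕ) :
    itf f (a + b) v = itf f a u := by
  simp [itf, Function.iterate_add_apply]
  rw [show (fun o => o.bind f)^[b] (some v) = some u from h]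

lemma itf_none_mono {f : W → Option W} {v : W} {m m' : ℕ} (h : itf f m v = none)
    (hm : m ≤ m') : itf f m' v = none := by
  obtain ⟨a, rfl⟩ := Nat.exists_eq_add_of_le hm
  induction a with
  | zero => simpa
  | succ a ih => rw [show m + (a+1) = (m+a)+1 by ring, itf_succ', ih (by omega)]; rfl

/-- acyclicity : every vertex eventually falls off -/
def Acy (f : W → Option W) : Prop := ∀ v, ∃ m, itf f m v = none

lemma reach_step {f : W → Option W} {v u : W} (h : f v = some u)
    (hu : ∃ m, itf f m u = none) : ∃ m, itf f m v = none := by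
  obtain ⟨m, hm⟩ := hu
  exact ⟨m + 1, by rw [itf_succ_of_some h]; exact hm⟩

lemma no_cycle {f : W → Option W} (hf : Acy f) {v : W} {t : ℕ} (ht : t ≠ 0)
    (h : itf f t v = some v) : False := by
  have key : ∀ q, itf f (q * t) v = some v := by
    intro q
    induction q with
    | zero => simp
    | succ q ih =>
      have : (q + 1) * t = q * t + t := by ring
      rw [this, itf_add h (q*t), ih]
  obtain ⟨m, hm⟩ := hf v
  have := key m
  rw [itf_none_mono hm (Nat.le_mul_of_pos_right m (Nat.pos_of_ne_zero ht))] at this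
  exact nomatch this

lemma f_ne_some_self {f : W → Option W} (hf : Acy f) (v : W) : f v ≠ some v := by
  intro h
  exact no_cycle hf one_ne_zero (by rw [itf_one]; exact h)

/-- depth: least m with itf = none -/
noncomputable def depth (f : W → Option W) (hf : Acy f) (v : W) : ℕ := Nat.find (hf v)

lemma depth_spec (f : W → Option W) (hf : Acy f) (v : W) : itf f (depth f hf v) v = none :=
  Nat.find_spec (hf v)

lemma depth_pos (f : W → Option W) (hf : Acy f) (v : W) : 0 < depth f hf v := by
  rcases Nat.eq_zero_or_pos (depth f hf v) with h | h
  · have := depth_spec f hf v; rw [h] at this; simp at this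
  · exact h

lemma itf_pred_ne_none (f : W → Option W) (hf : Acy f) (v : W) :
    itf f (depth f hf v - 1) v ≠ none :=
  Nat.find_min (hf v) (Nat.sub_lt (depth_pos f hf v) one_pos)

lemma depth_le {f : W → Option W} (hf : Acy f) {v : W} {m : ℕ} (h : itf f m v = none) :
    depth f hf v ≤ m := Nat.find_le h

lemma depth_eq_succ {f : W → Option W} (hf : Acy f) {v u : W} (h : f v = some u) :
    depth f hf v = depth f hf u + 1 := by
  have h1 : itf f (depth f hf u + 1) v = none := by
    rw [itf_succ_of_some h]; exact depth_spec f hf u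
  have h2 : depth f hf v ≤ depth f hf u + 1 := depth_le hf h1
  have h3 : itf f (depth f hf v - 1) u = none := by
    have := depth_spec f hf v
    have hd := depth_pos f hf v
    rw [show depth f hf v = (depth f hf v - 1) + 1 by omega, itf_succ_of_some h] at this
    exact this
  have h4 : depth f hf u ≤ depth f hf v - 1 := depth_le hf h3
  have := depth_pos f hf v
  omega

/-- the root eventually reached -/
noncomputable def rootOf (f : W → Option W) (hf : Acy f) (v : W) : W :=
  (itf f (depth f hf v - 1) v).get
    (Option.ne_none_iff_isSome.mp (itf_pred_ne_none f hf v))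

lemma itf_rootOf (f : W → Option W) (hf : Acy f) (v : W) :
    itf f (depth f hf v - 1) v = some (rootOf f hf v) := by
  simp [rootOf]

lemma f_rootOf (f : W → Option W) (hf : Acy f) (v : W) : f (rootOf f hf v) = none := by
  have h := depth_spec f hf v
  have hd := depth_pos f hf v
  rw [show depth f hf v = (depth f hf v - 1) + 1 by omega, itf_succ',
    itf_rootOf f hf v] at h
  simpa using h

lemma rootOf_eq_self {f : W → Option W} (hf : Acy f) {v : W} (h : f v = none) :
    rootOf f hf v = v := by
  have hd : depth f hf v = 1 := by
    have h1 : itf f 1 v = none := by rw [itf_one]; exact h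
    have := depth_le hf h1
    have := depth_pos f hf v
    omega
  have := itf_rootOf f hf v
  rw [hd] at this
  simpa using this.symm

lemma rootOf_step {f : W → Option W} (hf : Acy f) {v u : W} (h : f v = some u) :
    rootOf f hf v = rootOf f hf u := by
  have hd := depth_eq_succ hf h
  have h1 := itf_rootOf f hf v
  rw [hd, show depth f hf u + 1 - 1 = (depth f hf u - 1) + 1 by
      have := depth_pos f hf u; omega, itf_succ_of_some h] at h1
  rw [itf_rootOf f hf u] at h1
  exact (Option.some_inj.mp h1).symm

/-- reaches relation -/
def reaches (f : W → Option W) (w v : W) : Prop := ∃ m, itf f m w = some v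

lemma reaches_rootOf (f : W → Option W) (hf : Acy f) (v : W) :
    reaches f v (rootOf f hf v) := ⟨_, itf_rootOf f hf v⟩

lemma rootOf_eq_of_reaches {f : W → Option W} (hf : Acy f) {w v : W}
    (h : reaches f w v) : rootOf f hf w = rootOf f hf v := by
  obtain ⟨m, hm⟩ := h
  induction m generalizing w with
  | zero => simp at hm; subst hm; rfl
  | succ m ih =>
    cases hfw : f w with
    | none =>
      rw [itf_none_mono (by rw [itf_one]; exact hfw) (by omega : 1 ≤ m + 1)] at hm
      exact nomatch hm
    | some u =>
      rw [itf_succ_of_some hfw] at hm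
      rw [rootOf_step hf hfw]
      exact ih hm

lemma reaches_iff_rootOf {f : W → Option W} (hf : Acy f) {w v : W} (hv : f v = none) :
    reaches f w v ↔ rootOf f hf w = v := by
  constructor
  · intro h; rw [rootOf_eq_of_reaches hf h, rootOf_eq_self hf hv]
  · intro h; rw [← h]; exact reaches_rootOf f hf w


section Update
open Function

lemma acy_update_none {f : W → Option W} (hf : Acy f) (v : W) :
    Acy (update f v none) := by
  set g := update f v none with hg
  have H : ∀ d u, depth f hf u ≤ d → ∃ m, itf g m u = none := by
    intro d
    induction d with
    | zero => intro u hu; have := depth_pos f hf u; omega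
    | succ d ih =>
      intro u hu
      by_cases huv : u = v
      · exact ⟨1, by rw [itf_one, hg, huv, update_self]⟩
      · cases hfu : f u with
        | none => exact ⟨1, by rw [itf_one, hg, update_of_ne huv, hfu]⟩
        | some x =>
          have hgu : g u = some x := by rw [hg, update_of_ne huv, hfu]
          have := depth_eq_succ hf hfu
          exact reach_step hgu (ih x (by omega))
  exact fun u => H _ u le_rfl

lemma acy_update_some {f : W → Option W} (hf : Acy f) {v w : W} (hv : f v = none)
    (hw : ¬ reaches f w v) : Acy (update f v (some w)) := by
  set g := update f v (some w) with hg
  have hwv : rootOf f hf w ≠ v := fun h => hw ((reaches_iff_rootOf hf hv).mpr h)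
  have A : ∀ d u, depth f hf u ≤ d → rootOf f hf u ≠ v → ∃ m, itf g m u = none := by
    intro d
    induction d with
    | zero => intro u hu; have := depth_pos f hf u; omega
    | succ d ih =>
      intro u hu hru
      have huv : u ≠ v := by
        intro h; subst h; exact hru (rootOf_eq_self hf hv)
      cases hfu : f u with
      | none => exact ⟨1, by rw [itf_one, hg, update_of_ne huv, hfu]⟩
      | some x =>
        have hgu : g u = some x := by rw [hg, update_of_ne huv, hfu]
        have hdx := depth_eq_succ hf hfu
        have hrx : rootOf f hf x ≠ v := by rw [← rootOf_step hf hfu]; exact hru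
        exact reach_step hgu (ih x (by omega) hrx)
  have hreachw : ∃ m, itf g m w = none := A _ w le_rfl hwv
  have hreachv : ∃ m, itf g m v = none :=
    reach_step (by rw [hg, update_self]) hreachw
  have B : ∀ d u, depth f hf u ≤ d → ∃ m, itf g m u = none := by
    intro d
    induction d with
    | zero => intro u hu; have := depth_pos f hf u; omega
    | succ d ih =>
      intro u hu
      by_cases hru : rootOf f hf u = v
      · by_cases huv : u = v
        · subst huv; exact hreachv
        · cases hfu : f u with
          | none => exact absurd (rootOf_eq_self hf hfu) (by rw [hru]; exact fun h => huv h.symm)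
          | some x =>
            have hgu : g u = some x := by rw [hg, update_of_ne huv, hfu]
            have hdx := depth_eq_succ hf hfu
            exact reach_step hgu (ih x (by omega))
      · exact A _ u hu hru
  exact fun u => B _ u le_rfl

lemma not_reaches_of_remove {f : W → Option W} (hf : Acy f) {v w : W} (hvw : f v = some w)
    (hg : Acy (update f v none)) : ¬ reaches (update f v none) w v := by
  set g := update f v none with hgdef
  rintro ⟨m, hm⟩
  -- m can be taken minimal; along the way values are not v
  -- show itf f m' w = itf g m' w for m' ≤ d where d least with itf g d w = some v
  have hex : ∃ d, itf g d w = some v := ⟨m, hm⟩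
  classical
  set d := Nat.find hex with hd
  have hds : itf g d w = some v := Nat.find_spec hex
  have key : ∀ j, j ≤ d → itf g j w = itf f j w := by
    intro j hj
    induction j with
    | zero => rfl
    | succ j ih =>
      have hlt : j < d := by omega
      rw [itf_succ', itf_succ', ← ih (by omega)]
      cases ho : itf g j w with
      | none =>
        exfalso
        have := itf_none_mono ho (le_of_lt hlt)
        rw [hds] at this; exact nomatch this
      | some u =>
        have huv : u ≠ v := by
          intro h; subst h
          exact Nat.find_min hex hlt ho
        simp [hgdef, Function.update_of_ne huv]
  have hfd : itf f d w = some v := by rw [← key d le_rfl]; exact hds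
  have : itf f (d + 1) w = some w := by
    rw [itf_succ', hfd]; simpa using hvw
  exact no_cycle hf (Nat.succ_ne_zero d) this

end Update

section Count

variable [Fintype W]

/-- number of non-root vertices (edges) -/
noncomputable def nr (f : W → Option W) : ℕ :=
  (Finset.univ.filter (fun v => f v ≠ none)).card

lemma nr_update_none {f : W → Option W} {v : W} (hv : f v ≠ none) :
    nr (Function.update f v none) = nr f - 1 := by
  classical
  have hset : (Finset.univ.filter (fun u => Function.update f v none u ≠ none))
      = (Finset.univ.filter (fun u => f u ≠ none)).erase v := by
    ext u
    by_cases huv : u = v <;>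
      simp [huv, Function.update_self, Function.update_of_ne, *]
  rw [nr, hset, Finset.card_erase_of_mem (by simp [hv])]
  rfl

lemma nr_update_some {f : W → Option W} {v w : W} (hv : f v = none) :
    nr (Function.update f v (some w)) = nr f + 1 := by
  classical
  have hset : (Finset.univ.filter (fun u => Function.update f v (some w) u ≠ none))
      = insert v (Finset.univ.filter (fun u => f u ≠ none)) := by
    ext u
    by_cases huv : u = v <;>
      simp [huv, Function.update_self, Function.update_of_ne, *]
  rw [nr, hset, Finset.card_insert_of_notMem (by simp [hv])]
  rfl

end Count


section Main

variable (W) [Fintype W]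

noncomputable def AcyF (i : ℕ) : Finset (W → Option W) :=
  Finset.univ.filter (fun f => Acy f ∧ nr f = i)

variable {W}

lemma roots_card_add_nr (f : W → Option W) :
    (Finset.univ.filter (fun v => f v = none)).card + nr f = Fintype.card W := by
  classical
  rw [nr]
  rw [Finset.card_filter_add_card_filter_not (fun v => f v = none)]
  simp

lemma card_T {g : W → Option W} (hg : Acy g) :
    (Finset.univ.filter (fun q : W × W => g q.1 = none ∧ ¬ reaches g q.2 q.1)).card
      = (Finset.univ.filter (fun v => g v = none)).card * Fintype.card W
          - Fintype.card W := by
  classical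
  set k := Fintype.card W with hk
  set roots := Finset.univ.filter (fun v => g v = none) with hroots
  set T := Finset.univ.filter (fun q : W × W => g q.1 = none ∧ ¬ reaches g q.2 q.1) with hT
  have hfib : ∀ v ∈ roots, (T.filter (fun q => q.1 = v)).card
      = k - (Finset.univ.filter (fun w => rootOf g hg w = v)).card := by
    intro v hv
    have hvnone : g v = none := by simpa [hroots] using hv
    have hTv : T.filter (fun q => q.1 = v)
        = {v} ×ˢ (Finset.univ.filter (fun w => ¬ rootOf g hg w = v)) := by
      ext ⟨a, b⟩
      simp only [hT, Finset.mem_filter, Finset.mem_univ, true_and, Finset.mem_product,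
        Finset.mem_singleton]
      constructor
      · rintro ⟨⟨h1, h2⟩, rfl⟩
        exact ⟨rfl, fun h => h2 ((reaches_iff_rootOf hg hvnone).mpr h)⟩
      · rintro ⟨rfl, h⟩
        exact ⟨⟨hvnone, fun hr => h ((reaches_iff_rootOf hg hvnone).mp hr)⟩, rfl⟩
    rw [hTv, Finset.card_product, Finset.card_singleton, one_mul,
      Finset.filter_not, Finset.card_sdiff_of_subset (Finset.filter_subset _ _)]
    simp [k]
  have hcard : T.card = ∑ v ∈ roots, (T.filter (fun q => q.1 = v)).card := by
    apply Finset.card_eq_sum_card_fiberwise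
    intro q hq
    simp only [hT, Finset.coe_filter, Set.mem_setOf_eq, Finset.mem_filter, Finset.mem_univ, true_and] at hq
    simp [hroots, hq.1]
  have hsumfib : ∑ v ∈ roots, (Finset.univ.filter (fun w => rootOf g hg w = v)).card
      = Fintype.card W := by
    have h2 := Finset.card_eq_sum_card_fiberwise (s := (Finset.univ : Finset W)) (t := roots)
      (f := fun w => rootOf g hg w) (fun w _ => by simp [hroots, f_rootOf g hg w])
    rw [← h2, Finset.card_univ]
  have hle : ∀ v ∈ roots, (Finset.univ.filter (fun w => rootOf g hg w = v)).card ≤ k := by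
    intro v _
    simpa [k] using Finset.card_filter_le Finset.univ (fun w => rootOf g hg w = v)
  have : T.card + ∑ v ∈ roots, (Finset.univ.filter (fun w => rootOf g hg w = v)).card
      = roots.card * k := by
    rw [hcard, ← Finset.sum_add_distrib]
    rw [Finset.sum_congr rfl (fun v hv => by
      rw [hfib v hv, Nat.sub_add_cancel (hle v hv)])]
    simp [Finset.sum_const, mul_comm]
  rw [hsumfib] at this
  omega

lemma step_identity (i : ℕ) (hi : 1 ≤ i) :
    (AcyF W i).card * i = (AcyF W (i-1)).card *
      ((Fintype.card W - (i-1)) * Fintype.card W - Fintype.card W) := by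
  classical
  set k := Fintype.card W with hk
  set S1 : Finset ((W → Option W) × W) :=
    Finset.univ.filter (fun p => (Acy p.1 ∧ nr p.1 = i) ∧ p.1 p.2 ≠ none) with hS1
  set S2 : Finset ((W → Option W) × (W × W)) :=
    Finset.univ.filter (fun p => (Acy p.1 ∧ nr p.1 = i-1) ∧ p.1 p.2.1 = none ∧
      ¬ reaches p.1 p.2.2 p.2.1) with hS2
  have hcS1 : S1.card = (AcyF W i).card * i := by
    have h1 : S1.card = ∑ f ∈ AcyF W i, (S1.filter (fun p => p.1 = f)).card := by
      apply Finset.card_eq_sum_card_fiberwise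
      intro p hp
      simp only [hS1, Finset.coe_filter, Set.mem_setOf_eq, Finset.mem_filter, Finset.mem_univ, true_and] at hp
      simp [AcyF, hp.1.1, hp.1.2]
    rw [h1]
    rw [Finset.sum_congr rfl (fun f hf => ?_), Finset.sum_const, smul_eq_mul]
    have hf' : Acy f ∧ nr f = i := by simpa [AcyF] using hf
    have : S1.filter (fun p => p.1 = f)
        = {f} ×ˢ (Finset.univ.filter (fun v => f v ≠ none)) := by
      ext ⟨g, v⟩
      simp only [hS1, Finset.mem_filter, Finset.mem_univ, true_and, Finset.mem_product,
        Finset.mem_singleton]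
      constructor
      · rintro ⟨⟨_, h2⟩, rfl⟩; exact ⟨rfl, h2⟩
      · rintro ⟨rfl, h⟩; exact ⟨⟨hf', h⟩, rfl⟩
    rw [this, Finset.card_product, Finset.card_singleton, one_mul]
    exact hf'.2
  have hcS2 : S2.card = (AcyF W (i-1)).card * ((k - (i-1)) * k - k) := by
    have h1 : S2.card = ∑ f ∈ AcyF W (i-1), (S2.filter (fun p => p.1 = f)).card := by
      apply Finset.card_eq_sum_card_fiberwise
      intro p hp
      simp only [hS2, Finset.coe_filter, Set.mem_setOf_eq, Finset.mem_filter, Finset.mem_univ, true_and] at hp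
      simp [AcyF, hp.1.1, hp.1.2]
    rw [h1]
    rw [Finset.sum_congr rfl (fun f hf => ?_), Finset.sum_const, smul_eq_mul]
    have hf' : Acy f ∧ nr f = i - 1 := by simpa [AcyF] using hf
    have h2 : S2.filter (fun p => p.1 = f)
        = {f} ×ˢ (Finset.univ.filter
            (fun q : W × W => f q.1 = none ∧ ¬ reaches f q.2 q.1)) := by
      ext ⟨g, q⟩
      simp only [hS2, Finset.mem_filter, Finset.mem_univ, true_and, Finset.mem_product,
        Finset.mem_singleton]
      constructor
      · rintro ⟨⟨_, h2⟩, rfl⟩; exact ⟨rfl, h2⟩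
      · rintro ⟨rfl, h⟩; exact ⟨⟨hf', h⟩, rfl⟩
    rw [h2, Finset.card_product, Finset.card_singleton, one_mul, card_T hf'.1]
    have h3 := roots_card_add_nr f
    rw [hf'.2] at h3
    have : (Finset.univ.filter (fun v => f v = none)).card = k - (i-1) := by omega
    rw [this]
  have hbij : S1.card = S2.card := by
    apply Finset.card_bij'
      (i := fun (p : (W → Option W) × W) (_ : p ∈ S1) => (Function.update p.1 p.2 none, p.2, (p.1 p.2).getD p.2))
      (j := fun (q : (W → Option W) × (W × W)) (_ : q ∈ S2) => (Function.update q.1 q.2.1 (some q.2.2), q.2.1))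
    · -- hi : image in S2
      intro p hp
      simp only [hS1, Finset.mem_filter, Finset.mem_univ, true_and] at hp
      obtain ⟨⟨hacy, hnr⟩, hne⟩ := hp
      have hsome : p.1 p.2 = some ((p.1 p.2).getD p.2) := by
        cases h : p.1 p.2 with
        | none => exact absurd h hne
        | some w => simp [h]
      simp only [hS2, Finset.mem_filter, Finset.mem_univ, true_and]
      refine ⟨⟨acy_update_none hacy p.2, ?_⟩, ?_, ?_⟩
      · rw [nr_update_none hne, hnr]
      · simp
      · exact not_reaches_of_remove hacy hsome (acy_update_none hacy p.2)
    · -- hj : image in S1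
      intro q hq
      simp only [hS2, Finset.mem_filter, Finset.mem_univ, true_and] at hq
      obtain ⟨⟨hacy, hnr⟩, hnone, hnr2⟩ := hq
      simp only [hS1, Finset.mem_filter, Finset.mem_univ, true_and]
      refine ⟨⟨acy_update_some hacy hnone hnr2, ?_⟩, ?_⟩
      · rw [nr_update_some hnone, hnr]; omega
      · simp
    · -- left inverse
      intro p hp
      simp only [hS1, Finset.mem_filter, Finset.mem_univ, true_and] at hp
      have hne := hp.2
      have hne := hp.2
      have hsome : p.1 p.2 = some ((p.1 p.2).getD p.2) := by
        cases h : p.1 p.2 with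
        | none => exact absurd h hne
        | some w => simp [h]
      refine Prod.ext ?_ rfl
      show Function.update (Function.update p.1 p.2 none) p.2 (some ((p.1 p.2).getD p.2)) = p.1
      rw [Function.update_idem, ← hsome]
      exact Function.update_eq_self p.2 p.1
    · -- right inverse
      intro q hq
      simp only [hS2, Finset.mem_filter, Finset.mem_univ, true_and] at hq
      have hnone := hq.2.1
      have : Function.update (Function.update q.1 q.2.1 (some q.2.2)) q.2.1 none = q.1 := by
        rw [Function.update_idem, ← hnone]
        exact Function.update_eq_self q.2.1 q.1
      refine Prod.ext this (Prod.ext rfl ?_)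
      simp
  rw [← hcS1, ← hcS2, hbij]

lemma card_AcyF_zero : (AcyF W 0).card = 1 := by
  classical
  rw [Finset.card_eq_one]
  refine ⟨fun _ => none, ?_⟩
  ext f
  simp only [AcyF, Finset.mem_filter, Finset.mem_univ, true_and, Finset.mem_singleton]
  constructor
  · rintro ⟨hacy, hnr⟩
    funext v
    have : (Finset.univ.filter (fun v => f v ≠ none)) = ∅ := Finset.card_eq_zero.mp hnr
    have hv : ¬ f v ≠ none := by
      intro h
      have : v ∈ (∅ : Finset W) := this ▸ (Finset.mem_filter.mpr ⟨Finset.mem_univ v, h⟩)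
      simp at this
    simpa using hv
  · rintro rfl
    refine ⟨fun v => ⟨1, by rw [itf_one]⟩, ?_⟩
    simp [nr]

lemma card_AcyF (i : ℕ) (hik : i ≤ Fintype.card W - 1) (hk1 : 1 ≤ Fintype.card W) :
    (AcyF W i).card = (Fintype.card W)^i * Nat.choose (Fintype.card W - 1) i := by
  induction i with
  | zero => simpa using card_AcyF_zero
  | succ i ih =>
    set k := Fintype.card W with hk
    have hstep := step_identity (W := W) (i+1) (by omega)
    have h2 : (k - (i+1-1)) * k - k = k * (k - 1 - i) := by
      have hik' : i + 1 ≤ k - 1 := hik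
      have : k - (i+1-1) = (k - 1 - i) + 1 := by omega
      rw [this, add_mul, one_mul, Nat.add_sub_cancel, mul_comm]
    rw [h2, Nat.add_sub_cancel, ih (by omega)] at hstep
    have h3 : k ^ (i+1) * Nat.choose (k-1) (i+1) * (i+1)
        = k ^ i * Nat.choose (k-1) i * (k * (k - 1 - i)) := by
      rw [mul_assoc (k ^ (i+1)), Nat.choose_succ_right_eq]
      ring
    have h4 : (AcyF W (i+1)).card * (i+1)
        = k ^ (i+1) * Nat.choose (k-1) (i+1) * (i+1) := by rw [hstep, h3]
    exact Nat.eq_of_mul_eq_mul_right (by omega) h4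

/-- Cayley: number of acyclic parent functions with a unique root -/
theorem card_rooted_trees (hk1 : 1 ≤ Fintype.card W) :
    Nat.card {f : W → Option W // Acy f ∧ ∃! r, f r = none}
      = (Fintype.card W) ^ (Fintype.card W - 1) := by
  classical
  have hset : (Finset.univ.filter (fun f : W → Option W => Acy f ∧ ∃! r, f r = none))
      = AcyF W (Fintype.card W - 1) := by
    ext f
    simp only [AcyF, Finset.mem_filter, Finset.mem_univ, true_and]
    constructor
    · rintro ⟨hacy, r, hr, hru⟩
      refine ⟨hacy, ?_⟩
      have hroots : (Finset.univ.filter (fun v => f v = none)) = {r} := by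
        ext v
        simp only [Finset.mem_filter, Finset.mem_univ, true_and, Finset.mem_singleton]
        exact ⟨fun h => hru v h, fun h => h ▸ hr⟩
      have := roots_card_add_nr f
      rw [hroots, Finset.card_singleton] at this
      omega
    · rintro ⟨hacy, hnr⟩
      refine ⟨hacy, ?_⟩
      have := roots_card_add_nr f
      rw [hnr] at this
      have hc1 : (Finset.univ.filter (fun v => f v = none)).card = 1 := by omega
      obtain ⟨r, hr⟩ := Finset.card_eq_one.mp hc1
      refine ⟨r, ?_, ?_⟩
      · have : r ∈ Finset.univ.filter (fun v => f v = none) := hr ▸ Finset.mem_singleton_self r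
        simpa using this
      · intro v hv
        have : v ∈ ({r} : Finset W) := hr ▸ (Finset.mem_filter.mpr ⟨Finset.mem_univ v, hv⟩)
        simpa using this
  rw [Nat.card_eq_fintype_card, Fintype.card_subtype, hset,
    card_AcyF _ le_rfl hk1, Nat.choose_self, mul_one]

end Main

end CayleyAux

attribute [local instance] Classical.propDecidable

namespace CayleyAux

open SimpleGraph Walk

variable {n : ℕ} {V : Finset (Fin n)}

/-- the graph associated to a parent function on `V` -/
def graphOf (f : {x : Fin n // x ∈ V} → Option {x : Fin n // x ∈ V}) :
    SimpleGraph (Fin n) where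
  Adj x y := x ≠ y ∧ ∃ (hx : x ∈ V) (hy : y ∈ V),
    f ⟨x, hx⟩ = some ⟨y, hy⟩ ∨ f ⟨y, hy⟩ = some ⟨x, hx⟩
  symm := ⟨by
    rintro x y ⟨hne, hx, hy, h⟩
    exact ⟨hne.symm, hy, hx, h.symm⟩⟩
  loopless := ⟨fun x h => h.1 rfl⟩

variable {f : {x : Fin n // x ∈ V} → Option {x : Fin n // x ∈ V}}

lemma adj_of_some (hf : Acy f) {v u : {x : Fin n // x ∈ V}} (h : f v = some u) :
    (graphOf f).Adj ↑v ↑u := by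
  refine ⟨?_, v.2, u.2, Or.inl (by simpa using h)⟩
  intro hvu
  have : v = u := Subtype.ext hvu
  subst this
  exact f_ne_some_self hf v h

lemma mem_V_of_adj {x y : Fin n} (h : (graphOf f).Adj x y) : x ∈ V ∧ y ∈ V := by
  obtain ⟨-, hx, hy, -⟩ := h
  exact ⟨hx, hy⟩

lemma support_mem_V {a b : Fin n} (w : (graphOf f).Walk a b) :
    ∀ x ∈ w.support, x ∈ V ∨ x = b := by
  induction w with
  | nil => intro x hx; right; simpa using hx
  | cons h p ih =>
    intro x hx
    rw [support_cons, List.mem_cons] at hx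
    rcases hx with rfl | hx
    · exact Or.inl (mem_V_of_adj h).1
    · exact ih x hx

lemma reachable_rootOf (hf : Acy f) (v : {x : Fin n // x ∈ V}) :
    (graphOf f).Reachable ↑v ↑(rootOf f hf v) := by
  have H : ∀ d (u : {x : Fin n // x ∈ V}), depth f hf u ≤ d →
      (graphOf f).Reachable ↑u ↑(rootOf f hf u) := by
    intro d
    induction d with
    | zero => intro u hu; have := depth_pos f hf u; omega
    | succ d ih =>
      intro u hu
      cases hfu : f u with
      | none => rw [rootOf_eq_self hf hfu]
      | some x =>
        have h1 : (graphOf f).Adj ↑u ↑x := adj_of_some hf hfu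
        have h2 := depth_eq_succ hf hfu
        rw [rootOf_step hf hfu]
        exact (SimpleGraph.Adj.reachable h1).trans (ih x (by omega))
  exact H _ v le_rfl

lemma graphOf_connOn (hf : Acy f) (hr : ∃! r, f r = none) :
    ∀ v ∈ V, ∀ w ∈ V, (graphOf f).Reachable v w := by
  obtain ⟨r, hrn, hru⟩ := hr
  have key : ∀ (u : {x : Fin n // x ∈ V}), rootOf f hf u = r := fun u =>
    hru _ (f_rootOf f hf u)
  intro v hv w hw
  have h1 := reachable_rootOf hf ⟨v, hv⟩
  have h2 := reachable_rootOf hf ⟨w, hw⟩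
  rw [key] at h1 h2
  exact h1.trans h2.symm

lemma closed_mem_support_tail {G : SimpleGraph (Fin n)} {a : Fin n} {p : G.Walk a a}
    (hp : ¬ p.Nil) {x : Fin n} (hx : x ∈ p.support) : x ∈ p.support.tail := by
  obtain ⟨u, h, q, rfl⟩ := Walk.not_nil_iff.mp hp
  rw [support_cons, List.mem_cons] at hx
  rw [support_cons]
  rcases hx with rfl | hx
  · simpa using q.end_mem_support
  · simpa using hx

lemma graphOf_acyclic (hf : Acy f) : (graphOf f).IsAcyclic := by
  classical
  intro u c hc
  -- height function
  set H : Fin n → ℕ := fun x => if hx : x ∈ V then depth f hf ⟨x, hx⟩ else 0 with hH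
  obtain ⟨v, hvmem, hvmax⟩ := Finset.exists_max_image c.support.toFinset H
    ⟨u, List.mem_toFinset.mpr c.start_mem_support⟩
  rw [List.mem_toFinset] at hvmem
  set c' := c.rotate v hvmem with hc'def
  have hc' : c'.IsCycle := hc.rotate (hu := hvmem)
  have hmemc' : ∀ x ∈ c'.support, x ∈ c.support := by
    intro x hx
    have h1 : x ∈ c'.support.tail :=
      closed_mem_support_tail hc'.not_nil hx
    have h2 := (Walk.support_rotate c v hvmem).mem_iff.mp h1
    exact List.mem_of_mem_tail h2
  have hmax' : ∀ x ∈ c'.support, H x ≤ H v := fun x hx =>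
    hvmax x (List.mem_toFinset.mpr (hmemc' x hx))
  -- first edge
  obtain ⟨a, hadj, q, hq⟩ := Walk.not_nil_iff.mp hc'.not_nil
  -- last edge via reverse
  have hrevnil : ¬ c'.reverse.Nil := by
    rw [Walk.not_nil_iff_lt_length, Walk.length_reverse]
    have := hc'.three_le_length
    omega
  obtain ⟨b, hadj2, q2, hq2⟩ := Walk.not_nil_iff.mp hrevnil
  -- v ∈ V
  have hvV : v ∈ V := (mem_V_of_adj hadj).1
  have hHv : H v = depth f hf ⟨v, hvV⟩ := by simp [hH, hvV]
  -- parent claims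
  have claim : ∀ x (hadjx : (graphOf f).Adj v x), x ∈ c'.support →
      f ⟨v, hvV⟩ = some ⟨x, (mem_V_of_adj hadjx).2⟩ := by
    intro x hadjx hxs
    obtain ⟨hne, hx', hy', hor⟩ := hadjx
    have hxV : x ∈ V := hy'
    rcases hor with h | h
    · simpa using h
    · exfalso
      have hd : depth f hf ⟨x, hxV⟩ = depth f hf ⟨v, hvV⟩ + 1 := by
        have := depth_eq_succ hf (show f ⟨x, hy'⟩ = some ⟨v, hx'⟩ from h)
        simpa using this
      have hle := hmax' x hxs
      rw [hHv] at hle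
      have : H x = depth f hf ⟨x, hxV⟩ := by simp [hH, hxV]
      omega
  have has : a ∈ c'.support := by
    rw [hq, support_cons]
    exact List.mem_cons_of_mem _ q.start_mem_support
  have hbs : b ∈ c'.support := by
    have : b ∈ c'.reverse.support := by
      rw [hq2, support_cons]
      exact List.mem_cons_of_mem _ q2.start_mem_support
    rw [Walk.support_reverse, List.mem_reverse] at this
    exact this
  have ha := claim a hadj has
  have hb := claim b hadj2 hbs
  have hab : a = b := by
    have := ha.symm.trans hb
    simpa using this
  -- contradiction from edge nodup
  subst hab
  have hnodup : c'.edges.Nodup := hc'.isTrail.edges_nodup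
  have hedges : c'.edges = s(v, a) :: q.edges := by rw [hq, edges_cons]
  have hrevedges : c'.edges.reverse = s(v, a) :: q2.edges := by
    rw [← Walk.edges_reverse, hq2, edges_cons]
  have hlen : 3 ≤ c'.length := hc'.three_le_length
  have hq2len : q2.length + 1 = c'.length := by
    have h1 : c'.reverse.length = c'.length := Walk.length_reverse c'
    rw [hq2, Walk.length_cons] at h1
    exact h1
  have hq2ne : q2.edges.reverse ≠ [] := by
    intro h
    have := congrArg List.length h
    rw [List.length_reverse, Walk.length_edges] at this
    simp only [List.length_nil] at this
    omega
  have heq2 : c'.edges = q2.edges.reverse ++ [s(v, a)] := by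
    have := congrArg List.reverse hrevedges
    rw [List.reverse_reverse] at this
    rw [this, List.reverse_cons]
  obtain ⟨hd, tl, htl⟩ := List.exists_cons_of_ne_nil hq2ne
  rw [hedges, htl] at heq2
  rw [List.cons_append] at heq2
  have hqe : q.edges = tl ++ [s(v, a)] := (List.cons.injEq _ _ _ _).mp heq2 |>.2
  have hmem : s(v, a) ∈ q.edges := by rw [hqe]; simp
  rw [hedges, List.nodup_cons] at hnodup
  exact hnodup.1 hmem


section Extract

variable {G : SimpleGraph (Fin n)} {r : Fin n}

/-- the chosen path from `v` to the root -/
noncomputable def thePath (hc : ∀ v ∈ V, ∀ w ∈ V, G.Reachable v w) (hr : r ∈ V)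
    (v : Fin n) (hv : v ∈ V) : G.Path v r :=
  ((hc v hv r hr).some).toPath

lemma keyUP (ha : G.IsAcyclic) {v : Fin n} (p q : G.Walk v r) (hp : p.IsPath)
    (hq : q.IsPath) : p = q :=
  congrArg Subtype.val (SimpleGraph.isAcyclic_iff_path_unique.mp ha ⟨p, hp⟩ ⟨q, hq⟩)

variable (hc : ∀ v ∈ V, ∀ w ∈ V, G.Reachable v w) (hr : r ∈ V)
  (he : ∀ v w, G.Adj v w → v ∈ V ∧ w ∈ V)

/-- the parent function of a rooted tree -/
noncomputable def parentOf (v : {x : Fin n // x ∈ V}) : Option {x : Fin n // x ∈ V} :=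
  if hvr : (v : Fin n) = r then none
  else some ⟨(thePath hc hr ↑v v.2).val.getVert 1,
    (he _ _ (Walk.adj_snd (Walk.not_nil_of_ne hvr))).2⟩

lemma parentOf_none_iff (v : {x : Fin n // x ∈ V}) :
    parentOf hc hr he v = none ↔ (v : Fin n) = r := by
  unfold parentOf
  split <;> simp_all

lemma parentOf_tail (ha : G.IsAcyclic) {v u : {x : Fin n // x ∈ V}}
    (h : parentOf hc hr he v = some u) :
    (thePath hc hr ↑u u.2).val.length + 1 = (thePath hc hr ↑v v.2).val.length := by
  unfold parentOf at h
  split at h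
  · exact absurd h (by simp)
  · rename_i hvr
    set P := (thePath hc hr ↑v v.2).val with hP
    have hPpath : P.IsPath := (thePath hc hr ↑v v.2).2
    have hnn : ¬ P.Nil := Walk.not_nil_of_ne hvr
    have hcons := Walk.cons_tail_eq P hnn
    have htailpath : P.tail.IsPath := by
      rw [← hcons] at hPpath
      exact hPpath.of_cons
    have hu : (u : Fin n) = P.getVert 1 := by
      have := (Option.some_inj.mp h).symm
      exact congrArg Subtype.val this
    -- the path from u is the tail
    have heq : (thePath hc hr ↑u u.2).val = P.tail.copy hu.symm rfl := by
      apply keyUP ha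
      · exact (thePath hc hr ↑u u.2).2
      · simpa using htailpath
    rw [heq, Walk.length_copy]
    exact Walk.length_tail_add_one hnn

lemma parentOf_acy (ha : G.IsAcyclic) : Acy (parentOf hc hr he) := by
  have H : ∀ L (v : {x : Fin n // x ∈ V}), (thePath hc hr ↑v v.2).val.length ≤ L →
      ∃ m, itf (parentOf hc hr he) m v = none := by
    intro L
    induction L with
    | zero =>
      intro v hv
      refine ⟨1, ?_⟩
      rw [itf_one, parentOf_none_iff]
      have : (thePath hc hr ↑v v.2).val.length = 0 := by omega
      exact Walk.eq_of_length_eq_zero this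
    | succ L ih =>
      intro v hv
      cases hpv : parentOf hc hr he v with
      | none => exact ⟨1, by rw [itf_one]; exact hpv⟩
      | some u =>
        have := parentOf_tail hc hr he ha hpv
        exact reach_step hpv (ih u (by omega))
  exact fun v => H _ v le_rfl

lemma parentOf_existsUnique : ∃! v : {x : Fin n // x ∈ V},
    parentOf hc hr he v = none := by
  refine ⟨⟨r, hr⟩, (parentOf_none_iff hc hr he ⟨r, hr⟩).mpr rfl, ?_⟩
  intro y hy
  rw [parentOf_none_iff] at hy
  exact Subtype.ext hy

end Extract


section Canonical

lemma exists_canonical (hf : Acy f) {rt : {x : Fin n // x ∈ V}} (hrt : f rt = none)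
    (huniq : ∀ y, f y = none → y = rt) (v : {x : Fin n // x ∈ V}) :
    ∃ p : (graphOf f).Walk ↑v ↑rt, p.IsPath ∧ (∀ u, f v = some u → p.getVert 1 = ↑u)
      ∧ ∀ x ∈ p.support, ∃ hx : x ∈ V, depth f hf ⟨x, hx⟩ ≤ depth f hf v := by
  have H : ∀ d (v : {x : Fin n // x ∈ V}), depth f hf v ≤ d →
      ∃ p : (graphOf f).Walk ↑v ↑rt, p.IsPath ∧ (∀ u, f v = some u → p.getVert 1 = ↑u)
        ∧ ∀ x ∈ p.support, ∃ hx : x ∈ V, depth f hf ⟨x, hx⟩ ≤ depth f hf v := by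
    intro d
    induction d with
    | zero => intro v hv; have := depth_pos f hf v; omega
    | succ d ih =>
      intro v hv
      cases hfv : f v with
      | none =>
        obtain rfl := huniq v hfv
        refine ⟨Walk.nil, Walk.IsPath.nil, fun u hu => by simp [hfv] at hu, ?_⟩
        intro x hx
        rw [Walk.support_nil, List.mem_singleton] at hx
        subst hx
        exact ⟨v.2, by rw [Subtype.coe_eta]⟩
      | some u =>
        have hdep := depth_eq_succ hf hfv
        obtain ⟨p, hp, hg, hsup⟩ := ih u (by omega)
        have hvns : (↑v : Fin n) ∉ p.support := by
          intro hmem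
          obtain ⟨hx, hle⟩ := hsup ↑v hmem
          rw [Subtype.coe_eta] at hle
          omega
        refine ⟨Walk.cons (adj_of_some hf hfv) p, ?_, ?_, ?_⟩
        · exact (Walk.cons_isPath_iff _ _).mpr ⟨hp, hvns⟩
        · intro u' hu'
          obtain rfl := Option.some_inj.mp hu'
          rw [Walk.getVert_cons_succ, Walk.getVert_zero]
        · intro x hx
          rw [Walk.support_cons, List.mem_cons] at hx
          rcases hx with rfl | hx
          · exact ⟨v.2, by rw [Subtype.coe_eta]⟩
          · obtain ⟨hxV, hle⟩ := hsup x hx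
            exact ⟨hxV, by omega⟩
  exact H _ v le_rfl

end Canonical

section TheEquiv

variable (n V)

def PTreeOn : Type :=
  {f : {x : Fin n // x ∈ V} → Option {x : Fin n // x ∈ V} // Acy f ∧ ∃! r, f r = none}

def RTreeOn : Type :=
  {p : Fin n × SimpleGraph (Fin n) // p.1 ∈ V ∧ (∀ v w, p.2.Adj v w → v ∈ V ∧ w ∈ V) ∧
    (∀ v ∈ V, ∀ w ∈ V, p.2.Reachable v w) ∧ p.2.IsAcyclic}

variable {n V}

lemma parentOf_eq_some {G : SimpleGraph (Fin n)} {r : Fin n}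
    (hc : ∀ v ∈ V, ∀ w ∈ V, G.Reachable v w) (hr : r ∈ V)
    (he : ∀ v w, G.Adj v w → v ∈ V ∧ w ∈ V) {v u : {x : Fin n // x ∈ V}}
    (hvr : (v : Fin n) ≠ r)
    (hgv : (thePath hc hr ↑v v.2).val.getVert 1 = ↑u) :
    parentOf hc hr he v = some u := by
  unfold parentOf
  rw [dif_neg hvr]
  exact congrArg some (Subtype.ext hgv)

/-- the graph of the extracted parent function is the original graph -/
lemma graphOf_parentOf {G : SimpleGraph (Fin n)} {r : Fin n}
    (hc : ∀ v ∈ V, ∀ w ∈ V, G.Reachable v w) (hr : r ∈ V)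
    (he : ∀ v w, G.Adj v w → v ∈ V ∧ w ∈ V) (ha : G.IsAcyclic) :
    graphOf (parentOf hc hr he) = G := by
  classical
  ext x y
  constructor
  · rintro ⟨hne, hx, hy, h | h⟩
    · -- parentOf x = some y
      unfold parentOf at h
      split at h
      · exact absurd h (by simp)
      · rename_i hvr
        have h' : (thePath hc hr x hx).val.getVert 1 = y :=
          congrArg Subtype.val (Option.some_inj.mp h)
        have := Walk.adj_snd (p := (thePath hc hr x hx).val)
          (Walk.not_nil_of_ne hvr)
        rwa [Walk.snd, h'] at this
    · unfold parentOf at h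
      split at h
      · exact absurd h (by simp)
      · rename_i hvr
        have h' : (thePath hc hr y hy).val.getVert 1 = x :=
          congrArg Subtype.val (Option.some_inj.mp h)
        have := Walk.adj_snd (p := (thePath hc hr y hy).val)
          (Walk.not_nil_of_ne hvr)
        rw [Walk.snd, h'] at this
        exact this.symm
  · intro hadj
    obtain ⟨hx, hy⟩ := he x y hadj
    refine ⟨hadj.ne, hx, hy, ?_⟩
    by_cases hyr : y = r
    · -- x is adjacent to the root, so parent of x is y
      subst hyr
      have hxr : x ≠ y := hadj.ne
      left
      refine parentOf_eq_some hc hr he hxr ?_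
      have hR : (Walk.cons hadj Walk.nil).IsPath := by
        rw [Walk.cons_isPath_iff]
        exact ⟨Walk.IsPath.nil, by simp [hadj.ne]⟩
      have := keyUP ha (thePath hc hr x hx).val (Walk.cons hadj Walk.nil)
        (thePath hc hr x hx).2 hR
      rw [this, Walk.getVert_cons_succ, Walk.getVert_zero]
    · set P := (thePath hc hr y hy).val with hPdef
      have hPpath : P.IsPath := (thePath hc hr y hy).2
      by_cases hxP : x ∈ P.support
      · -- parent of y is x
        right
        set Q := P.dropUntil x hxP with hQdef
        have hQpath : Q.IsPath := hPpath.dropUntil hxP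
        have hynQ : y ∉ Q.support := by
          have hnodup := hPpath.support_nodup
          have hPs : P.support = y :: P.support.tail := Walk.support_eq_cons P
          have hyn : y ∉ P.support.tail := by
            rw [hPs] at hnodup
            exact (List.nodup_cons.mp hnodup).1
          have hspec := Walk.take_spec P hxP
          have hsupp : P.support = (P.takeUntil x hxP).support ++ Q.support.tail := by
            rw [← Walk.support_append, hspec]
          have hTs : (P.takeUntil x hxP).support
              = y :: (P.takeUntil x hxP).support.tail := Walk.support_eq_cons _
          have htail : P.support.tail
              = (P.takeUntil x hxP).support.tail ++ Q.support.tail := by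
            rw [hsupp, hTs]
            simp
          intro hyQ
          rw [Walk.support_eq_cons Q, List.mem_cons] at hyQ
          rcases hyQ with h1 | h1
          · exact hadj.ne h1.symm
          · exact hyn (htail ▸ List.mem_append_right _ h1)
        have hR : (Walk.cons hadj.symm Q).IsPath :=
          (Walk.cons_isPath_iff _ _).mpr ⟨hQpath, hynQ⟩
        refine parentOf_eq_some hc hr he hyr ?_
        have := keyUP ha (thePath hc hr y hy).val (Walk.cons hadj.symm Q)
          (thePath hc hr y hy).2 hR
        rw [this, Walk.getVert_cons_succ, Walk.getVert_zero]
      · -- parent of x is y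
        left
        have hxr : x ≠ r := by
          intro hxr
          subst hxr
          exact hxP P.end_mem_support
        have hR : (Walk.cons hadj P).IsPath :=
          (Walk.cons_isPath_iff _ _).mpr ⟨hPpath, hxP⟩
        refine parentOf_eq_some hc hr he hxr ?_
        have := keyUP ha (thePath hc hr x hx).val (Walk.cons hadj P)
          (thePath hc hr x hx).2 hR
        rw [this, Walk.getVert_cons_succ, Walk.getVert_zero]

/-- the tree equivalence -/
noncomputable def treeEquiv : PTreeOn n V ≃ RTreeOn n V where
  toFun fp := ⟨(↑(fp.2.2.choose), graphOf fp.1),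
    (fp.2.2.choose).2,
    fun v w h => mem_V_of_adj h,
    graphOf_connOn fp.2.1 fp.2.2,
    graphOf_acyclic fp.2.1⟩
  invFun pg := ⟨parentOf pg.2.2.2.1 pg.2.1 pg.2.2.1,
    parentOf_acy _ _ _ pg.2.2.2.2,
    parentOf_existsUnique _ _ _⟩
  left_inv := by
    rintro ⟨f, hf, hex⟩
    apply Subtype.ext
    funext v
    dsimp only
    set rt := hex.choose with hrtdef
    have hrtn : f rt = none := hex.choose_spec.1
    have huniq : ∀ y, f y = none → y = rt := fun y hy => hex.choose_spec.2 y hy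
    by_cases hvr : (v : Fin n) = ↑rt
    · have hveq : v = rt := Subtype.ext hvr
      rw [(parentOf_none_iff _ _ _ v).mpr hvr, hveq, hrtn]
    · have hfv : f v ≠ none := fun h => hvr (congrArg Subtype.val (huniq v h))
      obtain ⟨u, hu⟩ := Option.ne_none_iff_exists'.mp hfv
      obtain ⟨p, hp, hg, -⟩ := exists_canonical hf hrtn huniq v
      rw [parentOf_eq_some _ _ _ hvr ?_, hu]
      have := keyUP (graphOf_acyclic hf)
        (thePath (graphOf_connOn hf hex) rt.2 ↑v v.2).val p
        (thePath (graphOf_connOn hf hex) rt.2 ↑v v.2).2 hp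
      rw [this]
      exact hg u hu
  right_inv := by
    rintro ⟨⟨r, G⟩, hr, he, hc, ha⟩
    apply Subtype.ext
    dsimp only
    have hG := graphOf_parentOf hc hr he ha
    refine Prod.ext ?_ hG
    -- root component
    dsimp only
    generalize_proofs _ _ _ hexu
    have := hexu.choose_spec.1
    rw [parentOf_none_iff] at this
    exact this
  
end TheEquiv

end CayleyAux

attribute [local instance] Classical.propDecidable

/-- A rooted `G`-configuration of size `n`: a nonempty subset `V ⊆ [n]`, an undirected
tree on `V` with a designated root `r ∈ V` (represented as a graph on `Fin n` whose edges
lie inside `V`, acyclic and connected on `V`), and for each vertex outside `V` exactly one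
arc to a vertex `≠ r`, no two arcs ending at the same vertex.  (The arc map is recorded as
a total function that is the identity on `V`.) -/
structure GConfig (n : ℕ) where
  V : Finset (Fin n)
  root : Fin n
  hroot : root ∈ V
  tree : SimpleGraph (Fin n)
  hedge : ∀ v w, tree.Adj v w → v ∈ V ∧ w ∈ V
  hconn : ∀ v ∈ V, ∀ w ∈ V, tree.Reachable v w
  hacyc : tree.IsAcyclic
  arc : Fin n → Fin n
  harcV : ∀ v ∈ V, arc v = v
  harc : ∀ v, v ∉ V → arc v ≠ root
  hinj : ∀ v w, v ∉ V → w ∉ V → arc v = arc w → v = w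

namespace CayleyAux

variable {n : ℕ}

theorem gconfig_ext {c d : GConfig n} (hV : c.V = d.V) (hr : c.root = d.root)
    (ht : c.tree = d.tree) (ha : c.arc = d.arc) : c = d := by
  cases c; cases d
  dsimp at hV hr ht ha
  subst hV; subst hr; subst ht; subst ha
  rfl

instance : Finite (GConfig n) :=
  Finite.of_injective (fun c => (c.V, c.root, c.tree, c.arc)) (by
    intro a b h
    simp only [Prod.mk.injEq] at h
    exact gconfig_ext h.1 h.2.1 h.2.2.1 h.2.2.2)

def ArcOn (V : Finset (Fin n)) (r : Fin n) : Type :=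
  {a : Fin n → Fin n // (∀ v ∈ V, a v = v) ∧ (∀ v, v ∉ V → a v ≠ r) ∧
    ∀ v w, v ∉ V → w ∉ V → a v = a w → v = w}

instance {V : Finset (Fin n)} {r : Fin n} : Finite (ArcOn V r) := by
  unfold ArcOn; infer_instance

instance {V : Finset (Fin n)} : Finite (RTreeOn n V) := by
  unfold RTreeOn; infer_instance

instance {V : Finset (Fin n)} : Finite (PTreeOn n V) := by
  unfold PTreeOn; infer_instance

/-- arc functions are embeddings of the complement into non-root vertices -/
noncomputable def arcEquiv (V : Finset (Fin n)) (r : Fin n) :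
    ArcOn V r ≃ ({x : Fin n // x ∉ V} ↪ {x : Fin n // ¬ x = r}) where
  toFun a := ⟨fun x => ⟨a.1 x.1, a.2.2.1 x.1 x.2⟩,
    fun x y h => Subtype.ext (a.2.2.2 x.1 y.1 x.2 y.2 (congrArg Subtype.val h))⟩
  invFun e := ⟨fun x => if hx : x ∈ V then x else ↑(e ⟨x, hx⟩),
    fun v hv => dif_pos hv,
    fun v hv => by simp only [dif_neg hv]; exact (e ⟨v, hv⟩).2,
    fun v w hv hw h => by
      simp only [dif_neg hv, dif_neg hw] at h
      have := e.injective (Subtype.ext h)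
      exact congrArg Subtype.val this⟩
  left_inv a := by
    apply Subtype.ext
    funext v
    by_cases hv : v ∈ V
    · simp only [dif_pos hv]; exact (a.2.1 v hv).symm
    · simp only [dif_neg hv]; rfl
  right_inv e := by
    apply DFunLike.ext
    intro x
    apply Subtype.ext
    show (if hx : (x : Fin n) ∈ V then (x : Fin n) else _) = _
    rw [dif_neg x.2]

/-- configurations with fixed vertex set decompose as tree + arcs -/
noncomputable def configEquiv (V : Finset (Fin n)) :
    {c : GConfig n // c.V = V} ≃ Σ t : RTreeOn n V, ArcOn V t.1.1 where
  toFun cp := ⟨⟨(cp.1.root, cp.1.tree),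
      (by have h := cp.1.hroot; rw [cp.2] at h; exact h),
      (by have h := cp.1.hedge; rw [cp.2] at h; exact h),
      (by have h := cp.1.hconn; rw [cp.2] at h; exact h),
      cp.1.hacyc⟩,
    ⟨cp.1.arc,
      (by have h := cp.1.harcV; rw [cp.2] at h; exact h),
      (by have h := cp.1.harc; rw [cp.2] at h; exact h),
      (by have h := cp.1.hinj; rw [cp.2] at h; exact h)⟩⟩
  invFun ta := ⟨⟨V, ta.1.1.1, ta.1.2.1, ta.1.1.2, ta.1.2.2.1, ta.1.2.2.2.1, ta.1.2.2.2.2,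
    ta.2.1, ta.2.2.1, ta.2.2.2.1, ta.2.2.2.2⟩, rfl⟩
  left_inv cp := by
    apply Subtype.ext
    exact gconfig_ext cp.2.symm rfl rfl rfl
  right_inv ta := by
    rcases ta with ⟨⟨⟨r, G⟩, ht⟩, ⟨a, harc⟩⟩
    rfl

lemma card_PTreeOn {V : Finset (Fin n)} {k : ℕ} (hV : V.card = k) (hk : 1 ≤ k) :
    Nat.card (PTreeOn n V) = k ^ (k - 1) := by
  have h1 : Fintype.card {x : Fin n // x ∈ V} = k := by
    rw [Fintype.card_coe, hV]
  have := card_rooted_trees (W := {x : Fin n // x ∈ V}) (by omega)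
  rw [h1] at this
  exact this

lemma card_ArcOn {V : Finset (Fin n)} {k : ℕ} (hV : V.card = k) (r : Fin n) :
    Nat.card (ArcOn V r) = (n - 1).descFactorial (n - k) := by
  rw [Nat.card_congr (arcEquiv V r), Nat.card_eq_fintype_card,
    Fintype.card_embedding_eq]
  congr 1
  · have h1 := Fintype.card_subtype_compl (fun x : Fin n => x = r)
    rw [Fintype.card_subtype_eq, Fintype.card_fin] at h1
    exact h1
  · have h1 := Fintype.card_subtype_compl (fun x : Fin n => x ∈ V)
    rw [Fintype.card_fin] at h1
    rw [h1]
    congr 1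
    rw [← hV, ← Fintype.card_coe V]

lemma card_configV {V : Finset (Fin n)} {k : ℕ} (hV : V.card = k) (hk : 1 ≤ k) :
    Nat.card {c : GConfig n // c.V = V}
      = k ^ (k - 1) * (n - 1).descFactorial (n - k) := by
  rw [Nat.card_congr (configEquiv V)]
  letI : Fintype (RTreeOn n V) := Fintype.ofFinite _
  letI : ∀ t : RTreeOn n V, Fintype (ArcOn V t.1.1) := fun t => Fintype.ofFinite _
  rw [Nat.card_eq_fintype_card, Fintype.card_sigma]
  have hterm : ∀ t : RTreeOn n V, Fintype.card (ArcOn V t.1.1)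
      = (n - 1).descFactorial (n - k) := by
    intro t
    rw [← Nat.card_eq_fintype_card, card_ArcOn hV]
  rw [Finset.sum_congr rfl (fun t _ => hterm t), Finset.sum_const, smul_eq_mul]
  congr 1
  rw [Finset.card_univ, ← Nat.card_eq_fintype_card,
    Nat.card_congr (treeEquiv (n := n) (V := V)).symm, card_PTreeOn hV hk]

end CayleyAux

attribute [local instance] Classical.propDecidable

namespace CayleyAux

variable {n : ℕ}

noncomputable def fiberEquiv (k : ℕ) :
    {c : GConfig n // c.V.card = k} ≃
      Σ V : {S : Finset (Fin n) // S.card = k}, {c : GConfig n // c.V = ↑V} where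
  toFun c := ⟨⟨c.1.V, c.2⟩, ⟨c.1, rfl⟩⟩
  invFun p := ⟨p.2.1, by rw [p.2.2]; exact p.1.2⟩
  left_inv c := Subtype.ext rfl
  right_inv p := by
    rcases p with ⟨⟨V, hV⟩, ⟨c, hc⟩⟩
    dsimp at hc
    subst hc
    rfl

end CayleyAux

/-- For `1 ≤ k ≤ n`, the number of rooted `G`-configurations of size `n` with exactly `k`
tree vertices equals `C(n,k) · k^{k-1} · (n-1)!/(k-1)!`. -/
theorem stmt4 (n k : ℕ) (hn : 1 ≤ n) (hk : 1 ≤ k) (hkn : k ≤ n) :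
    Nat.card {c : GConfig n // c.V.card = k} =
      n.choose k * k ^ (k - 1) * ((n - 1).factorial / (k - 1).factorial) := by
  classical
  rw [Nat.card_congr (CayleyAux.fiberEquiv k)]
  letI : ∀ V : {S : Finset (Fin n) // S.card = k}, Fintype {c : GConfig n // c.V = ↑V} :=
    fun V => Fintype.ofFinite _
  rw [Nat.card_eq_fintype_card, Fintype.card_sigma]
  have hterm : ∀ V : {S : Finset (Fin n) // S.card = k},
      Fintype.card {c : GConfig n // c.V = ↑V}
        = k ^ (k - 1) * (n - 1).descFactorial (n - k) := by
    intro V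
    rw [← Nat.card_eq_fintype_card, CayleyAux.card_configV V.2 hk]
  rw [Finset.sum_congr rfl (fun V _ => hterm V), Finset.sum_const, smul_eq_mul,
    Finset.card_univ, Fintype.card_finset_len, Fintype.card_fin]
  have hdesc : (n - 1).descFactorial (n - k)
      = (n - 1).factorial / (k - 1).factorial := by
    rw [Nat.descFactorial_eq_div (by omega : n - k ≤ n - 1),
      show n - 1 - (n - k) = k - 1 from by omega]
  rw [hdesc, mul_assoc]
end

section
/- For all n ≥ 1, \sum_{k=1}^{n} (-1)^{n-k} * C(n,k) * ((n-1)!/(k-1)!) * k^{k-1} is divisible by n. -/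
/-- For all `n ≥ 1`, `n` divides `∑_{k=1}^n (-1)^{n-k} C(n,k) ((n-1)!/(k-1)!) k^{k-1}`. -/
theorem stmt7 (n : ℕ) (hn : 1 ≤ n) :
    (n : ℤ) ∣ ∑ k ∈ Finset.Icc 1 n, (-1 : ℤ) ^ (n - k) * (n.choose k) *
      (((n - 1).factorial / (k - 1).factorial : ℕ) : ℤ) * (k : ℤ) ^ (k - 1) := by
  apply Finset.dvd_sum
  intro k hk
  simp only [Finset.mem_Icc] at hk
  obtain ⟨hk1, hkn⟩ := hk
  have key : n ∣ n.choose k * ((n - 1).factorial / (k - 1).factorial) * k ^ (k - 1) := by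
    rcases eq_or_lt_of_le hk1 with h | h
    · -- k = 1
      subst h
      simp only [Nat.choose_one_right]
      exact Dvd.dvd.mul_right (Dvd.dvd.mul_right dvd_rfl _) _
    · -- 2 ≤ k
      have h2 : 2 ≤ k := h
      have hm : n.choose k * k = n * (n - 1).choose (k - 1) := by
        have := Nat.add_one_mul_choose_eq (n - 1) (k - 1)
        rw [Nat.sub_add_cancel hn,
          Nat.sub_add_cancel hk1] at this
        omega
      have hpow : k ^ (k - 1) = k ^ (k - 2) * k := by
        rw [← pow_succ]
        congr 1
        omega
      refine ⟨(n - 1).choose (k - 1) * ((n - 1).factorial / (k - 1).factorial) * k ^ (k - 2), ?_⟩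
      calc n.choose k * ((n - 1).factorial / (k - 1).factorial) * k ^ (k - 1)
          = (n.choose k * k) * (((n - 1).factorial / (k - 1).factorial) * k ^ (k - 2)) := by
            rw [hpow]; ring
        _ = n * ((n - 1).choose (k - 1) * ((n - 1).factorial / (k - 1).factorial) * k ^ (k - 2)) := by
            rw [hm]; ring
  have keyZ : (n : ℤ) ∣ (n.choose k : ℤ) *
      (((n - 1).factorial / (k - 1).factorial : ℕ) : ℤ) * (k : ℤ) ^ (k - 1) := by
    have := Int.natCast_dvd_natCast.mpr key
    push_cast at this
    exact this
  have := keyZ.mul_left ((-1 : ℤ) ^ (n - k))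
  convert this using 1
  ring
end

section
/- There exists a weight-preserving sign-reversing involution on the set of G-configurations of size n that are not lone-child-avoiding spanning trees: the involution changes the number of tree vertices by exactly one (hence reverses the weight (-1)^{n-k}), and its fixed-point-free domain is exactly the set of G-configurations that either have an arc vertex or have a tree vertex with exactly one child. -/
/-- The set of children of `v` in the graph `G` rooted at `r`. -/
def children {n : ℕ} (G : SimpleGraph (Fin n)) (r v : Fin n) : Set (Fin n) :=
  {w | G.Adj v w ∧ G.dist r w = G.dist r v + 1}

namespace S11

open SimpleGraph Function Classical

structure P (n : ℕ) (r : Fin n) where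
  V : Finset (Fin n)
  hr : r ∈ V
  f : Fin n → Fin n
  hfr : f r = r
  hfV : ∀ v ∈ V, f v ∈ V
  hreach : ∀ v ∈ V, ∃ k, f^[k] v = r
  hnr : ∀ v, v ∉ V → f v ≠ r
  hinj : ∀ v w, v ∉ V → w ∉ V → f v = f w → v = w

variable {n : ℕ} {r : Fin n}

theorem P.ext' {Q Q' : P n r} (hV : Q.V = Q'.V) (hf : Q.f = Q'.f) : Q = Q' := by
  cases Q; cases Q'; simp_all

namespace P

variable (Q : P n r)

/-- depth of a vertex: least number of parent steps to reach the root -/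
noncomputable def d (v : Fin n) : ℕ :=
  if h : ∃ k, Q.f^[k] v = r then Nat.find h else 0

lemma d_spec {v : Fin n} (h : ∃ k, Q.f^[k] v = r) : Q.f^[Q.d v] v = r := by
  rw [d, dif_pos h]; exact Nat.find_spec h

lemma d_le {v : Fin n} {k : ℕ} (h : Q.f^[k] v = r) : Q.d v ≤ k := by
  rw [d, dif_pos ⟨k, h⟩]; exact Nat.find_le h

@[simp] lemma d_root : Q.d r = 0 :=
  Nat.le_zero.mp (Q.d_le (by simp))

lemma d_pos {v : Fin n} (hv : v ∈ Q.V) (hvr : v ≠ r) : 0 < Q.d v := by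
  rcases Nat.eq_zero_or_pos (Q.d v) with h | h
  · exact absurd (by simpa [h] using Q.d_spec (Q.hreach v hv)) hvr
  · exact h

lemma d_eq {v : Fin n} (hv : v ∈ Q.V) (hvr : v ≠ r) : Q.d v = Q.d (Q.f v) + 1 := by
  have hex : ∃ k, Q.f^[k] v = r := Q.hreach v hv
  have h1 : 0 < Q.d v := Q.d_pos hv hvr
  have hs : Q.f^[Q.d v] v = r := Q.d_spec hex
  have hs' : Q.f^[Q.d v - 1] (Q.f v) = r := by
    rw [← Function.iterate_succ_apply]
    rwa [Nat.succ_eq_add_one, Nat.sub_add_cancel h1]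
  have hle : Q.d (Q.f v) ≤ Q.d v - 1 := Q.d_le hs'
  have hge : Q.d v ≤ Q.d (Q.f v) + 1 := by
    apply Q.d_le
    rw [Function.iterate_succ_apply]
    exact Q.d_spec ⟨_, hs'⟩
  omega

lemma f_ne_self {v : Fin n} (hv : v ∈ Q.V) (hvr : v ≠ r) : Q.f v ≠ v := by
  intro h
  obtain ⟨k, hk⟩ := Q.hreach v hv
  rw [Function.iterate_fixed h] at hk
  exact hvr hk

lemma iterate_mem {v : Fin n} (hv : v ∈ Q.V) (k : ℕ) : Q.f^[k] v ∈ Q.V := by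
  induction k with
  | zero => simpa
  | succ k ih => rw [Function.iterate_succ_apply']; exact Q.hfV _ ih

/-- the tree graph associated to a parent structure -/
def G : SimpleGraph (Fin n) :=
  SimpleGraph.fromRel (fun v w => v ∈ Q.V ∧ v ≠ r ∧ Q.f v = w)

lemma adj_iff {v w : Fin n} : Q.G.Adj v w ↔
    v ≠ w ∧ ((v ∈ Q.V ∧ v ≠ r ∧ Q.f v = w) ∨ (w ∈ Q.V ∧ w ≠ r ∧ Q.f w = v)) := by
  simp [G, SimpleGraph.fromRel_adj]

lemma adj_f {v : Fin n} (hv : v ∈ Q.V) (hvr : v ≠ r) : Q.G.Adj v (Q.f v) :=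
  Q.adj_iff.mpr ⟨(Q.f_ne_self hv hvr).symm, Or.inl ⟨hv, hvr, rfl⟩⟩

lemma reach_root (v : Fin n) (hv : v ∈ Q.V) : Q.G.Reachable v r := by
  by_cases hvr : v = r
  · subst hvr; exact SimpleGraph.Reachable.refl _
  · have h := Q.d_eq hv hvr
    have := reach_root (Q.f v) (Q.hfV v hv)
    exact (Q.adj_f hv hvr).reachable.trans this
termination_by Q.d v
decreasing_by simp_wf; omega


lemma edge_rep {a b : Fin n} (h : Q.G.Adj a b) :
    ∃ c, (c ∈ Q.V ∧ c ≠ r ∧ Q.f c ≠ c) ∧ s(a, b) = s(c, Q.f c) := by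
  rcases (Q.adj_iff.mp h).2 with ⟨h1, h2, h3⟩ | ⟨h1, h2, h3⟩
  · exact ⟨a, ⟨h1, h2, by rw [h3]; exact h.ne'⟩, by rw [h3]⟩
  · exact ⟨b, ⟨h1, h2, by rw [h3]; exact h.ne⟩, by rw [h3, Sym2.eq_swap]⟩

noncomputable def deep (e : Sym2 (Fin n)) : Fin n :=
  if h : ∃ c, (c ∈ Q.V ∧ c ≠ r ∧ Q.f c ≠ c) ∧ e = s(c, Q.f c) then h.choose else r

lemma deep_spec {e : Sym2 (Fin n)} (h : ∃ c, (c ∈ Q.V ∧ c ≠ r ∧ Q.f c ≠ c) ∧ e = s(c, Q.f c)) :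
    (Q.deep e ∈ Q.V ∧ Q.deep e ≠ r ∧ Q.f (Q.deep e) ≠ Q.deep e) ∧ e = s(Q.deep e, Q.f (Q.deep e)) := by
  rw [deep, dif_pos h]; exact h.choose_spec

lemma acyc : Q.G.IsAcyclic := by
  intro x c hc
  have hnodupE : c.edges.Nodup := hc.isCircuit.isTrail.edges_nodup
  have hnodupS : c.support.tail.Nodup := hc.support_nodup
  classical
  set E := c.edges.toFinset with hE
  set S := c.support.tail.toFinset with hS
  have hcardE : E.card = c.length := by
    rw [hE, List.toFinset_card_of_nodup hnodupE, c.length_edges]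
  have hcardS : S.card = c.length := by
    rw [hS, List.toFinset_card_of_nodup hnodupS, List.length_tail, c.length_support]; omega
  have hlen3 := hc.three_le_length
  have hxtail : x ∈ c.support.tail := by
    rw [← SimpleGraph.Walk.support_tail_of_not_nil c hc.not_nil]
    exact SimpleGraph.Walk.end_mem_support _
  have hsupp : ∀ y, y ∈ c.support → y ∈ S := by
    intro y hy
    rw [hS, List.mem_toFinset]
    rw [c.support_eq_cons, List.mem_cons] at hy
    rcases hy with rfl | hy
    · exact hxtail
    · exact hy
  have hrep : ∀ e ∈ E, ∃ c₀, (c₀ ∈ Q.V ∧ c₀ ≠ r ∧ Q.f c₀ ≠ c₀) ∧ e = s(c₀, Q.f c₀) := by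
    intro e he
    rw [hE, List.mem_toFinset] at he
    induction e with
    | _ a b => exact Q.edge_rep (c.adj_of_mem_edges he)
  have hsurj := Finset.surj_on_of_inj_on_of_card_le (s := E) (t := S)
      (fun e _ => Q.deep e)
      (fun e he => by
        obtain ⟨hd, hee⟩ := Q.deep_spec (hrep e he)
        apply hsupp
        apply c.fst_mem_support_of_mem_edges
        rw [← hee]
        rwa [hE, List.mem_toFinset] at he)
      (fun e₁ e₂ he₁ he₂ hde => by
        obtain ⟨_, hee₁⟩ := Q.deep_spec (hrep e₁ he₁)
        obtain ⟨_, hee₂⟩ := Q.deep_spec (hrep e₂ he₂)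
        rw [hee₁, hee₂, hde])
      (by omega)
  obtain ⟨m, hmS, hmin⟩ := S.exists_min_image Q.d ⟨x, by rwa [hS, List.mem_toFinset]⟩
  obtain ⟨e, he, hme⟩ := hsurj m hmS
  obtain ⟨⟨hmV, hmr, _⟩, hee⟩ := Q.deep_spec (hrep e he)
  rw [← hme] at hmV hmr hee
  have hfm : Q.f m ∈ S := by
    apply hsupp
    apply c.snd_mem_support_of_mem_edges
    rw [← hee]
    rwa [hE, List.mem_toFinset] at he
  have := hmin _ hfm
  have := Q.d_eq hmV hmr
  omega


end P

variable (c : GConfig n)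

theorem GConfig.ext' {c c' : GConfig n} (hV : c.V = c'.V) (hroot : c.root = c'.root)
    (htree : c.tree = c'.tree) (harc : c.arc = c'.arc) : c = c' := by
  cases c; cases c'; simp_all

noncomputable def dep (v : Fin n) : ℕ := c.tree.dist c.root v

lemma reach {v : Fin n} (hv : v ∈ c.V) : c.tree.Reachable c.root v :=
  c.hconn _ c.hroot _ hv

lemma dep_eq_zero_iff {v : Fin n} (hv : v ∈ c.V) : dep c v = 0 ↔ v = c.root := by
  rw [dep, (reach c hv).dist_eq_zero_iff]; exact eq_comm

lemma exists_par {v : Fin n} (hv : v ∈ c.V) (hvr : v ≠ c.root) :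
    ∃ u, c.tree.Adj v u ∧ dep c u + 1 = dep c v := by
  obtain ⟨p, hp⟩ := (reach c hv).exists_walk_length_eq_dist
  have hpos : 0 < dep c v := (reach c hv).pos_dist_of_ne (Ne.symm hvr)
  obtain ⟨u, hadj, q, hq⟩ := SimpleGraph.Walk.exists_eq_cons_of_ne hvr p.reverse
  have hqlen : q.length = dep c v - 1 := by
    have := congrArg SimpleGraph.Walk.length hq
    rw [SimpleGraph.Walk.length_reverse, hp] at this
    simp only [SimpleGraph.Walk.length_cons] at this
    rw [dep]
    omega
  have hu : u ∈ c.V := (c.hedge _ _ hadj).2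
  have h1 : dep c u ≤ dep c v - 1 := by
    have : c.tree.dist u c.root ≤ q.length := SimpleGraph.dist_le q
    rw [hqlen] at this
    rw [dep, SimpleGraph.dist_comm]
    exact this
  have h2 : dep c v ≤ dep c u + 1 := by
    obtain ⟨W, hW⟩ := (reach c hu).exists_walk_length_eq_dist
    have := SimpleGraph.dist_le (W.concat hadj.symm)
    rw [SimpleGraph.Walk.length_concat, hW] at this
    exact this
  exact ⟨u, hadj, by omega⟩

noncomputable def par (v : Fin n) : Fin n :=
  if h : v ∈ c.V ∧ v ≠ c.root then (exists_par c h.1 h.2).choose else v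

lemma par_spec {v : Fin n} (hv : v ∈ c.V) (hvr : v ≠ c.root) :
    c.tree.Adj v (par c v) ∧ dep c (par c v) + 1 = dep c v := by
  rw [par, dif_pos ⟨hv, hvr⟩]; exact (exists_par c hv hvr).choose_spec

lemma par_mem {v : Fin n} (hv : v ∈ c.V) (hvr : v ≠ c.root) : par c v ∈ c.V :=
  (c.hedge _ _ (par_spec c hv hvr).1).2

@[simp] lemma par_root : par c c.root = c.root := dif_neg (by simp)

lemma par_nmem {v : Fin n} (hv : v ∉ c.V) : par c v = v := dif_neg (by tauto)

lemma canon (v : Fin n) (hv : v ∈ c.V) :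
    ∃ p : c.tree.Walk v c.root, p.IsPath ∧ p.length = dep c v ∧
      (∀ x ∈ p.support, x ∈ c.V ∧ (x = v ∨ dep c x < dep c v)) ∧
      (v ≠ c.root → p.getVert 1 = par c v) := by
  by_cases hvr : v = c.root
  · subst hvr
    refine ⟨SimpleGraph.Walk.nil, by simp, ?_, ?_, by tauto⟩
    · simp [dep, SimpleGraph.dist_self]
    · intro x hx
      simp at hx
      subst hx
      exact ⟨hv, Or.inl rfl⟩
  · obtain ⟨hadj, hdep⟩ := par_spec c hv hvr
    obtain ⟨p, hp, hlen, hsupp, -⟩ := canon (par c v) (par_mem c hv hvr)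
    refine ⟨SimpleGraph.Walk.cons hadj p, ?_, ?_, ?_, ?_⟩
    · rw [SimpleGraph.Walk.cons_isPath_iff]
      refine ⟨hp, fun hvp => ?_⟩
      rcases hsupp v hvp with ⟨-, h | h⟩
      · rw [← h] at hadj
        exact c.tree.irrefl hadj
      · omega
    · simp [SimpleGraph.Walk.length_cons, hlen]; omega
    · intro x hx
      rw [SimpleGraph.Walk.support_cons, List.mem_cons] at hx
      rcases hx with rfl | hx
      · exact ⟨hv, Or.inl rfl⟩
      · rcases hsupp x hx with ⟨h1, h2 | h2⟩
        · exact ⟨h1, Or.inr (by rw [h2]; omega)⟩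
        · exact ⟨h1, Or.inr (by omega)⟩
    · intro _
      simp [SimpleGraph.Walk.getVert_cons_succ]
termination_by dep c v
decreasing_by omega

lemma adj_par {v w : Fin n} (h : c.tree.Adj v w) (hle : dep c w ≤ dep c v) :
    par c v = w := by
  have hv : v ∈ c.V := (c.hedge _ _ h).1
  have hw : w ∈ c.V := (c.hedge _ _ h).2
  have hvr : v ≠ c.root := by
    rintro rfl
    have h0 : dep c c.root = 0 := by simp [dep, SimpleGraph.dist_self]
    have : dep c w = 0 := by omega
    rw [dep_eq_zero_iff c hw] at this
    subst this
    exact c.tree.irrefl h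
  obtain ⟨p1, hp1, -, -, hgv1⟩ := canon c v hv
  obtain ⟨p2, hp2, -, hsupp2, -⟩ := canon c w hw
  have hpath : (SimpleGraph.Walk.cons h p2).IsPath := by
    rw [SimpleGraph.Walk.cons_isPath_iff]
    refine ⟨hp2, fun hvp => ?_⟩
    rcases hsupp2 v hvp with ⟨-, rfl | hlt⟩
    · exact c.tree.irrefl h
    · omega
  have heq := c.hacyc.path_unique ⟨p1, hp1⟩ ⟨SimpleGraph.Walk.cons h p2, hpath⟩
  have heq2 : p1 = SimpleGraph.Walk.cons h p2 := congrArg Subtype.val heq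
  have := congrArg (fun q : c.tree.Walk v c.root => q.getVert 1) heq2
  simp only [SimpleGraph.Walk.getVert_cons_succ] at this
  rw [hgv1 hvr] at this
  simpa using this

lemma dichotomy {v w : Fin n} (h : c.tree.Adj v w) : par c v = w ∨ par c w = v := by
  rcases le_or_gt (dep c w) (dep c v) with hle | hlt
  · exact Or.inl (adj_par c h hle)
  · exact Or.inr (adj_par c h.symm (le_of_lt hlt))

lemma children_eq (q : Fin n) :
    children c.tree c.root q = {w | w ∈ c.V ∧ w ≠ c.root ∧ par c w = q} := by
  ext w
  simp only [children, Set.mem_setOf_eq]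
  constructor
  · rintro ⟨hadj, hdist⟩
    have hw : w ∈ c.V := (c.hedge _ _ hadj).2
    have hq : q ∈ c.V := (c.hedge _ _ hadj).1
    have hdep : dep c w = dep c q + 1 := hdist
    have hwr : w ≠ c.root := by
      intro h
      rw [← dep_eq_zero_iff c hw] at h
      omega
    rcases dichotomy c hadj with hpq | hpw
    · exfalso
      have hqr : q ≠ c.root := by
        intro h
        subst h
        rw [par_root] at hpq
        subst hpq
        exact c.tree.irrefl hadj
      have := (par_spec c hq hqr).2
      rw [hpq] at this
      omega
    · exact ⟨hw, hwr, hpw⟩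
  · rintro ⟨hw, hwr, hpar⟩
    have hps := par_spec c hw hwr
    rw [hpar] at hps
    exact ⟨hps.1.symm, by have := hps.2; exact this.symm⟩


end S11

namespace S11
open SimpleGraph Function Classical

variable {n : ℕ} {r : Fin n}

noncomputable def toG (Q : P n r) : GConfig n where
  V := Q.V
  root := r
  hroot := Q.hr
  tree := Q.G
  hedge := fun v w h => by
    rcases (Q.adj_iff.mp h).2 with ⟨h1, h2, h3⟩ | ⟨h1, h2, h3⟩
    · exact ⟨h1, h3 ▸ Q.hfV _ h1⟩
    · exact ⟨h3 ▸ Q.hfV _ h1, h1⟩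
  hconn := fun v hv w hw => (Q.reach_root v hv).trans (Q.reach_root w hw).symm
  hacyc := Q.acyc
  arc := fun v => if v ∈ Q.V then v else Q.f v
  harcV := fun v hv => by simp [hv]
  harc := fun v hv => by simpa [hv] using Q.hnr v hv
  hinj := fun v w hv hw => by simpa [hv, hw] using Q.hinj v w hv hw

@[simp] lemma toG_root (Q : P n r) : (toG Q).root = r := rfl
@[simp] lemma toG_V (Q : P n r) : (toG Q).V = Q.V := rfl
@[simp] lemma toG_tree (Q : P n r) : (toG Q).tree = Q.G := rfl

lemma par_toG (Q : P n r) (v : Fin n) (hv : v ∈ Q.V) : par (toG Q) v = Q.f v := by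
  by_cases hvr : v = r
  · rw [hvr, show par (toG Q) r = r from par_root (toG Q), Q.hfr]
  · have hadj : (toG Q).tree.Adj v (Q.f v) := Q.adj_f hv hvr
    rcases dichotomy (toG Q) hadj with h | h
    · exact h
    · exfalso
      by_cases hfr : Q.f v = r
      · rw [hfr] at h
        have h1 : par (toG Q) r = r := par_root (toG Q)
        rw [h1] at h
        exact hvr h.symm
      · have hd1 := Q.d_eq hv hvr
        have ih := par_toG Q (Q.f v) (Q.hfV v hv)
        rw [ih] at h
        have h2 := Q.d_eq (Q.hfV v hv) hfr
        rw [h] at h2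
        omega
termination_by Q.d v
decreasing_by
  have := Q.d_eq hv hvr
  omega

lemma reach_aux (c : GConfig n) (v : Fin n) (hv : v ∈ c.V) :
    ∃ k, (fun v => if v ∈ c.V then par c v else c.arc v)^[k] v = c.root := by
  by_cases hvr : v = c.root
  · exact ⟨0, by simp [hvr]⟩
  · obtain ⟨k, hk⟩ := reach_aux c (par c v) (par_mem c hv hvr)
    refine ⟨k + 1, ?_⟩
    rw [Function.iterate_succ_apply]
    simpa [hv] using hk
termination_by dep c v
decreasing_by
  have := (par_spec c hv hvr).2
  omega

noncomputable def fromG (c : GConfig n) (h : c.root = r) : P n r where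
  V := c.V
  hr := h ▸ c.hroot
  f := fun v => if v ∈ c.V then par c v else c.arc v
  hfr := by
    subst h
    simp [c.hroot]
  hfV := fun v hv => by
    by_cases hvr : v = c.root
    · subst hvr; simpa [c.hroot] using c.hroot
    · simpa [hv] using par_mem c hv hvr
  hreach := fun v hv => h ▸ reach_aux c v hv
  hnr := fun v hv => by
    subst h
    simpa [hv] using c.harc v hv
  hinj := fun v w hv hw => by
    simpa [hv, hw] using c.hinj v w hv hw

lemma fromG_f (c : GConfig n) (h : c.root = r) :
    (fromG c h).f = fun v => if v ∈ c.V then par c v else c.arc v := rfl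

lemma toG_fromG (c : GConfig n) (h : c.root = r) : toG (fromG c h) = c := by
  apply GConfig.ext'
  · rfl
  · exact h.symm
  · ext v w
    rw [show (toG (fromG c h)).tree = (fromG c h).G from rfl, P.adj_iff]
    constructor
    · rintro ⟨hne, ⟨h1, h2, h3⟩ | ⟨h1, h2, h3⟩⟩
      · have hp : par c v = w := by
          have h3' : (if v ∈ c.V then par c v else c.arc v) = w := h3
          rwa [if_pos (show v ∈ c.V from h1)] at h3'
        rw [← hp]
        exact (par_spec c h1 (by rw [← h] at h2; exact h2)).1
      · have hp : par c w = v := by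
          have h3' : (if w ∈ c.V then par c w else c.arc w) = v := h3
          rwa [if_pos (show w ∈ c.V from h1)] at h3'
        have := (par_spec c h1 (by rw [← h] at h2; exact h2)).1
        rw [hp] at this
        exact this.symm
    · intro hadj
      have hv := (c.hedge _ _ hadj).1
      have hw := (c.hedge _ _ hadj).2
      refine ⟨hadj.ne, ?_⟩
      rcases dichotomy c hadj with hp | hp
      · have hvr : v ≠ c.root := by
          rintro rfl
          rw [par_root] at hp
          subst hp
          exact c.tree.irrefl hadj
        exact Or.inl ⟨hv, by rw [h] at hvr; exact hvr, show (if v ∈ c.V then par c v else c.arc v) = w by rw [if_pos hv]; exact hp⟩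
      · have hwr : w ≠ c.root := by
          rintro rfl
          rw [par_root] at hp
          subst hp
          exact c.tree.irrefl hadj
        exact Or.inr ⟨hw, by rw [h] at hwr; exact hwr, show (if w ∈ c.V then par c w else c.arc w) = v by rw [if_pos hw]; exact hp⟩
  · funext v
    by_cases hv : v ∈ c.V
    · show (if v ∈ c.V then v else _) = c.arc v
      rw [if_pos hv, c.harcV v hv]
    · show (if v ∈ c.V then v else (if v ∈ c.V then par c v else c.arc v)) = c.arc v
      rw [if_neg hv, if_neg hv]

lemma fromG_toG (Q : P n r) : fromG (toG Q) rfl = Q := by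
  apply P.ext'
  · rfl
  · funext v
    by_cases hv : v ∈ Q.V
    · show (if v ∈ Q.V then par (toG Q) v else _) = Q.f v
      rw [if_pos hv]
      exact par_toG Q v hv
    · show (if v ∈ Q.V then _ else (toG Q).arc v) = Q.f v
      rw [if_neg hv]
      show (if v ∈ Q.V then v else Q.f v) = Q.f v
      rw [if_neg hv]

end S11

namespace S11
namespace P
open SimpleGraph Function Classical

variable {n : ℕ} {r : Fin n} (Q : P n r)

def childSet (q : Fin n) : Finset (Fin n) :=
  Q.V.filter (fun w => w ≠ r ∧ Q.f w = q)

lemma mem_childSet {q w : Fin n} : w ∈ Q.childSet q ↔ w ∈ Q.V ∧ w ≠ r ∧ Q.f w = q := by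
  simp [childSet]

def bad : Finset (Fin n) :=
  Finset.univ.filter (fun v => v ∉ Q.V ∨ Q.childSet (Q.f v) = {v})

lemma mem_bad {v : Fin n} : v ∈ Q.bad ↔ v ∉ Q.V ∨ Q.childSet (Q.f v) = {v} := by
  simp [bad]

def insF (v q : Fin n) : Fin n → Fin n := fun w =>
  if w = v then q else if w ∈ Q.V ∧ w ≠ r ∧ Q.f w = q then v else Q.f w

lemma insF_self (v q : Fin n) : Q.insF v q v = q := by simp [insF]

lemma insF_child {v q w : Fin n} (hw : w ∈ Q.childSet q) (hwv : w ≠ v) :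
    Q.insF v q w = v := by
  rw [Q.mem_childSet] at hw
  simp [insF, hwv, hw.1, hw.2.1, hw.2.2]

lemma insF_other {v q w : Fin n} (hwv : w ≠ v) (hw : w ∉ Q.childSet q) :
    Q.insF v q w = Q.f w := by
  rw [insF, if_neg hwv, if_neg]
  rw [Q.mem_childSet] at hw
  tauto

lemma ins_reach_aux (v q : Fin n) (hv : v ∉ Q.V) (hq : q ∈ Q.V)
    (w : Fin n) (hw : w ∈ Q.V) : ∃ k, (Q.insF v q)^[k] w = r := by
  by_cases hwr : w = r
  · exact ⟨0, by simp [hwr]⟩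
  · have hwv : w ≠ v := fun h => hv (h ▸ hw)
    by_cases hch : w ∈ Q.childSet q
    · have hfw : Q.f w = q := (Q.mem_childSet.mp hch).2.2
      have hd : Q.d w = Q.d q + 1 := by
        have := Q.d_eq hw hwr
        rwa [hfw] at this
      obtain ⟨k, hk⟩ := ins_reach_aux v q hv hq q hq
      refine ⟨k + 2, ?_⟩
      rw [show k + 2 = k + 1 + 1 from rfl, Function.iterate_succ_apply,
        Q.insF_child hch hwv, Function.iterate_succ_apply, Q.insF_self]
      exact hk
    · have hdec : Q.d (Q.f w) < Q.d w := by
        have := Q.d_eq hw hwr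
        omega
      obtain ⟨k, hk⟩ := ins_reach_aux v q hv hq (Q.f w) (Q.hfV w hw)
      refine ⟨k + 1, ?_⟩
      rw [Function.iterate_succ_apply, Q.insF_other hwv hch]
      exact hk
termination_by Q.d w
decreasing_by all_goals omega

noncomputable def ins (v q : Fin n) (hv : v ∉ Q.V) (hq : q ∈ Q.V) : P n r where
  V := insert v Q.V
  hr := Finset.mem_insert_of_mem Q.hr
  f := Q.insF v q
  hfr := by
    have hrv : r ≠ v := fun h => hv (h ▸ Q.hr)
    simp [insF, hrv, Q.hfr]
  hfV := by
    intro w hw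
    by_cases hwv : w = v
    · subst hwv
      rw [Q.insF_self]
      exact Finset.mem_insert_of_mem hq
    · have hwV : w ∈ Q.V := by
        rcases Finset.mem_insert.mp hw with h | h
        · exact absurd h hwv
        · exact h
      by_cases hch : w ∈ Q.childSet q
      · rw [Q.insF_child hch hwv]
        exact Finset.mem_insert_self _ _
      · rw [Q.insF_other hwv hch]
        exact Finset.mem_insert_of_mem (Q.hfV w hwV)
  hreach := by
    intro w hw
    rcases Finset.mem_insert.mp hw with h | h
    · obtain ⟨k, hk⟩ := Q.ins_reach_aux v q hv hq q hq
      refine ⟨k + 1, ?_⟩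
      rw [h, Function.iterate_succ_apply, Q.insF_self]
      exact hk
    · exact Q.ins_reach_aux v q hv hq w h
  hnr := by
    intro w hw
    have hwv : w ≠ v := fun h => hw (h ▸ Finset.mem_insert_self _ _)
    have hwV : w ∉ Q.V := fun h => hw (Finset.mem_insert_of_mem h)
    rw [Q.insF_other hwv (fun h => hwV (Q.mem_childSet.mp h).1)]
    exact Q.hnr w hwV
  hinj := by
    intro w w' hw hw'
    have hwv : w ≠ v := fun h => hw (h ▸ Finset.mem_insert_self _ _)
    have hwV : w ∉ Q.V := fun h => hw (Finset.mem_insert_of_mem h)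
    have hw'v : w' ≠ v := fun h => hw' (h ▸ Finset.mem_insert_self _ _)
    have hw'V : w' ∉ Q.V := fun h => hw' (Finset.mem_insert_of_mem h)
    rw [Q.insF_other hwv (fun h => hwV (Q.mem_childSet.mp h).1),
      Q.insF_other hw'v (fun h => hw'V (Q.mem_childSet.mp h).1)]
    exact Q.hinj w w' hwV hw'V

@[simp] lemma ins_V (v q : Fin n) (hv : v ∉ Q.V) (hq : q ∈ Q.V) :
    (Q.ins v q hv hq).V = insert v Q.V := rfl

@[simp] lemma ins_f (v q : Fin n) (hv : v ∉ Q.V) (hq : q ∈ Q.V) :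
    (Q.ins v q hv hq).f = Q.insF v q := rfl

def conF (v u₀ : Fin n) : Fin n → Fin n := fun w =>
  if w = v then u₀ else if w ∈ Q.V ∧ w ≠ r ∧ Q.f w = v then Q.f v else Q.f w

lemma conF_self (v u₀ : Fin n) : Q.conF v u₀ v = u₀ := by simp [conF]

lemma conF_child {v u₀ w : Fin n} (hw : w ∈ Q.childSet v) (hwv : w ≠ v) :
    Q.conF v u₀ w = Q.f v := by
  rw [Q.mem_childSet] at hw
  simp [conF, hwv, hw.1, hw.2.1, hw.2.2]

lemma conF_other {v u₀ w : Fin n} (hwv : w ≠ v) (hw : w ∉ Q.childSet v) :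
    Q.conF v u₀ w = Q.f w := by
  rw [conF, if_neg hwv, if_neg]
  rw [Q.mem_childSet] at hw
  tauto

lemma con_fw_ne {v w : Fin n} (hv : v ∈ Q.V) (hvr : v ≠ r) (hwv : w ≠ v)
    (hw : w ∉ Q.childSet v) (hwV : w ∈ Q.V) : Q.f w ≠ v := by
  intro h
  by_cases hwr : w = r
  · subst hwr
    rw [Q.hfr] at h
    exact hvr h.symm
  · exact hw (Q.mem_childSet.mpr ⟨hwV, hwr, h⟩)

lemma con_reach_aux (v u₀ : Fin n) (hv : v ∈ Q.V) (hvr : v ≠ r)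
    (w : Fin n) (hw : w ∈ Q.V) (hwv : w ≠ v) : ∃ k, (Q.conF v u₀)^[k] w = r := by
  by_cases hwr : w = r
  · exact ⟨0, by simp [hwr]⟩
  · by_cases hch : w ∈ Q.childSet v
    · have hfw : Q.f w = v := (Q.mem_childSet.mp hch).2.2
      have hd : Q.d w = Q.d v + 1 := by
        have := Q.d_eq hw hwr
        rwa [hfw] at this
      have hdv := Q.d_eq hv hvr
      obtain ⟨k, hk⟩ := con_reach_aux v u₀ hv hvr (Q.f v) (Q.hfV v hv) (Q.f_ne_self hv hvr)
      refine ⟨k + 1, ?_⟩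
      rw [Function.iterate_succ_apply, Q.conF_child hch hwv]
      exact hk
    · have hfwv : Q.f w ≠ v := Q.con_fw_ne hv hvr hwv hch hw
      have hdec : Q.d (Q.f w) < Q.d w := by
        have := Q.d_eq hw hwr
        omega
      obtain ⟨k, hk⟩ := con_reach_aux v u₀ hv hvr (Q.f w) (Q.hfV w hw) hfwv
      refine ⟨k + 1, ?_⟩
      rw [Function.iterate_succ_apply, Q.conF_other hwv hch]
      exact hk
termination_by Q.d w
decreasing_by all_goals omega

noncomputable def con (v u₀ : Fin n) (hv : v ∈ Q.V) (hvr : v ≠ r)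
    (hu₀r : u₀ ≠ r) (hu₀ : ∀ w, w ∉ Q.V → Q.f w ≠ u₀) : P n r where
  V := Q.V.erase v
  hr := Finset.mem_erase.mpr ⟨Ne.symm hvr, Q.hr⟩
  f := Q.conF v u₀
  hfr := by
    have hrv : r ≠ v := Ne.symm hvr
    simp [conF, hrv, Q.hfr]
  hfV := by
    intro w hw
    obtain ⟨hwv, hwV⟩ := Finset.mem_erase.mp hw
    by_cases hch : w ∈ Q.childSet v
    · rw [Q.conF_child hch hwv]
      exact Finset.mem_erase.mpr ⟨Q.f_ne_self hv hvr, Q.hfV v hv⟩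
    · rw [Q.conF_other hwv hch]
      exact Finset.mem_erase.mpr ⟨Q.con_fw_ne hv hvr hwv hch hwV, Q.hfV w hwV⟩
  hreach := by
    intro w hw
    obtain ⟨hwv, hwV⟩ := Finset.mem_erase.mp hw
    exact Q.con_reach_aux v u₀ hv hvr w hwV hwv
  hnr := by
    intro w hw
    by_cases hwv : w = v
    · subst hwv
      rw [Q.conF_self]
      exact hu₀r
    · have hwV : w ∉ Q.V := fun h => hw (Finset.mem_erase.mpr ⟨hwv, h⟩)
      rw [Q.conF_other hwv (fun h => hwV (Q.mem_childSet.mp h).1)]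
      exact Q.hnr w hwV
  hinj := by
    intro w w' hw hw'
    by_cases hwv : w = v <;> by_cases hw'v : w' = v
    · subst hwv; subst hw'v; intro; rfl
    · subst hwv
      have hw'V : w' ∉ Q.V := fun h => hw' (Finset.mem_erase.mpr ⟨hw'v, h⟩)
      rw [Q.conF_self, Q.conF_other hw'v (fun h => hw'V (Q.mem_childSet.mp h).1)]
      intro h
      exact absurd h.symm (hu₀ w' hw'V)
    · subst hw'v
      have hwV : w ∉ Q.V := fun h => hw (Finset.mem_erase.mpr ⟨hwv, h⟩)
      rw [Q.conF_self, Q.conF_other hwv (fun h => hwV (Q.mem_childSet.mp h).1)]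
      intro h
      exact absurd h (hu₀ w hwV)
    · have hwV : w ∉ Q.V := fun h => hw (Finset.mem_erase.mpr ⟨hwv, h⟩)
      have hw'V : w' ∉ Q.V := fun h => hw' (Finset.mem_erase.mpr ⟨hw'v, h⟩)
      rw [Q.conF_other hwv (fun h => hwV (Q.mem_childSet.mp h).1),
        Q.conF_other hw'v (fun h => hw'V (Q.mem_childSet.mp h).1)]
      exact Q.hinj w w' hwV hw'V

@[simp] lemma con_V (v u₀ : Fin n) (hv : v ∈ Q.V) (hvr : v ≠ r) (hu₀r : u₀ ≠ r)
    (hu₀ : ∀ w, w ∉ Q.V → Q.f w ≠ u₀) : (Q.con v u₀ hv hvr hu₀r hu₀).V = Q.V.erase v := rfl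

@[simp] lemma con_f (v u₀ : Fin n) (hv : v ∈ Q.V) (hvr : v ≠ r) (hu₀r : u₀ ≠ r)
    (hu₀ : ∀ w, w ∉ Q.V → Q.f w ≠ u₀) : (Q.con v u₀ hv hvr hu₀r hu₀).f = Q.conF v u₀ := rfl

end P
end S11

namespace S11
namespace P
open Function Classical

variable {n : ℕ} {r : Fin n} (Q : P n r)

lemma childSet_ne_root {x : Fin n} : Q.childSet x ≠ {r} := by
  intro h
  have : r ∈ Q.childSet x := h ▸ Finset.mem_singleton_self r
  exact (Q.mem_childSet.mp this).2.1 rfl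

variable {v q : Fin n} (hv : v ∉ Q.V) (hq : q ∈ Q.V)

lemma ins_vq (hv : v ∉ Q.V) (hq : q ∈ Q.V) : v ≠ q := fun h => hv (h ▸ hq)
lemma ins_vr (hv : v ∉ Q.V) : v ≠ r := fun h => hv (h ▸ Q.hr)

lemma childSet_ins_q : (Q.ins v q hv hq).childSet q = {v} := by
  ext w
  rw [mem_childSet, Finset.mem_singleton]
  constructor
  · rintro ⟨hw, hwr, hfw⟩
    by_contra hwv
    have hwV : w ∈ Q.V := by
      rcases Finset.mem_insert.mp hw with h | h
      · exact absurd h hwv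
      · exact h
    rw [ins_f] at hfw
    by_cases hch : w ∈ Q.childSet q
    · rw [Q.insF_child hch hwv] at hfw
      exact Q.ins_vq hv hq hfw
    · rw [Q.insF_other hwv hch] at hfw
      exact hch (Q.mem_childSet.mpr ⟨hwV, hwr, hfw⟩)
  · rintro rfl
    exact ⟨Finset.mem_insert_self _ _, Q.ins_vr hv, by rw [ins_f, Q.insF_self]⟩

lemma childSet_ins_v :
    (Q.ins v q hv hq).childSet v = Q.childSet q := by
  ext w
  rw [mem_childSet, Q.mem_childSet]
  constructor
  · rintro ⟨hw, hwr, hfw⟩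
    rw [ins_f] at hfw
    by_cases hwv : w = v
    · rw [hwv, Q.insF_self] at hfw
      exact absurd hfw.symm (Q.ins_vq hv hq)
    · have hwV : w ∈ Q.V := by
        rcases Finset.mem_insert.mp hw with h | h
        · exact absurd h hwv
        · exact h
      by_cases hch : w ∈ Q.childSet q
      · exact Q.mem_childSet.mp hch
      · rw [Q.insF_other hwv hch] at hfw
        exact absurd (hfw ▸ Q.hfV w hwV) hv
  · rintro ⟨hw, hwr, hfw⟩
    have hwv : w ≠ v := fun h => hv (h ▸ hw)
    exact ⟨Finset.mem_insert_of_mem hw, hwr,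
      by rw [ins_f, Q.insF_child (Q.mem_childSet.mpr ⟨hw, hwr, hfw⟩) hwv]⟩

lemma childSet_ins_other (x : Fin n) (hxq : x ≠ q) (hxv : x ≠ v) :
    (Q.ins v q hv hq).childSet x = Q.childSet x := by
  ext w
  rw [mem_childSet, Q.mem_childSet]
  constructor
  · rintro ⟨hw, hwr, hfw⟩
    rw [ins_f] at hfw
    by_cases hwv : w = v
    · rw [hwv, Q.insF_self] at hfw
      exact absurd hfw.symm hxq
    · have hwV : w ∈ Q.V := by
        rcases Finset.mem_insert.mp hw with h | h
        · exact absurd h hwv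
        · exact h
      by_cases hch : w ∈ Q.childSet q
      · rw [Q.insF_child hch hwv] at hfw
        exact absurd hfw.symm hxv
      · rw [Q.insF_other hwv hch] at hfw
        exact ⟨hwV, hwr, hfw⟩
  · rintro ⟨hw, hwr, hfw⟩
    have hwv : w ≠ v := fun h => hv (h ▸ hw)
    have hch : w ∉ Q.childSet q := by
      intro h
      exact hxq ((Q.mem_childSet.mp h).2.2 ▸ hfw.symm)
    exact ⟨Finset.mem_insert_of_mem hw, hwr, by rw [ins_f, Q.insF_other hwv hch]; exact hfw⟩

lemma bad_ins : (Q.ins v q hv hq).bad = Q.bad := by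
  ext u
  rw [mem_bad, mem_bad]
  by_cases huv : u = v
  · subst huv
    constructor
    · intro _
      exact Or.inl hv
    · intro _
      refine Or.inr ?_
      rw [ins_f, Q.insF_self, childSet_ins_q]
  · by_cases huV : u ∈ Q.V
    · have hu' : u ∈ (Q.ins v q hv hq).V := Finset.mem_insert_of_mem huV
      have h1 : ¬ (u ∉ (Q.ins v q hv hq).V) := fun h => h hu'
      have h2 : ¬ (u ∉ Q.V) := fun h => h huV
      simp only [h1, h2, false_or]
      by_cases hch : u ∈ Q.childSet q
      · have hfu : (Q.ins v q hv hq).f u = v := by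
          rw [ins_f, Q.insF_child hch huv]
        have hfuQ : Q.f u = q := (Q.mem_childSet.mp hch).2.2
        rw [hfu, childSet_ins_v, hfuQ]
      · have hur : u ≠ r → Q.f u ≠ q := by
          intro hur h
          exact hch (Q.mem_childSet.mpr ⟨huV, hur, h⟩)
        have hfu : (Q.ins v q hv hq).f u = Q.f u := by
          rw [ins_f, Q.insF_other huv hch]
        rw [hfu]
        by_cases hfq : Q.f u = q
        · -- then u = r
          have hur2 : u = r := by
            by_contra h
            exact hur h hfq
          rw [hfq, childSet_ins_q]
          constructor
          · intro h
            exact absurd (Finset.singleton_inj.mp h).symm huv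
          · intro h
            have : u ∈ Q.childSet q := h ▸ Finset.mem_singleton_self u
            exact absurd this hch
        · have hfv : Q.f u ≠ v := fun h => hv (h ▸ Q.hfV u huV)
          rw [Q.childSet_ins_other hv hq _ hfq hfv]
    · have h1 : u ∉ (Q.ins v q hv hq).V := by
        intro h
        rcases Finset.mem_insert.mp h with h' | h'
        · exact huv h'
        · exact huV h'
      simp only [h1, huV]
      tauto

end P
end S11

namespace S11
namespace P
open Function Classical

variable {n : ℕ} {r : Fin n} (Q : P n r)

lemma chain_exists (v : Fin n) (hv : v ∉ Q.V) :
    ∃ k, 0 < k ∧ (Q.f^[k] v ∈ Q.V ∨ Q.f^[k] v = v) := by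
  by_contra hcon
  push_neg at hcon
  have hall : ∀ k, Q.f^[k] v ∉ Q.V := by
    intro k
    cases k with
    | zero => simpa
    | succ k => exact (hcon (k + 1) (Nat.succ_pos k)).1
  have peel : ∀ i j, i < j → Q.f^[i] v = Q.f^[j] v → False := by
    intro i
    induction i with
    | zero =>
      intro j hj h
      exact (hcon j hj).2 h.symm
    | succ i ih =>
      intro j hj h
      obtain ⟨j', rfl⟩ : ∃ j', j = j' + 1 := ⟨j - 1, by omega⟩
      rw [Function.iterate_succ_apply', Function.iterate_succ_apply'] at h
      exact ih j' (by omega) (Q.hinj _ _ (hall i) (hall j') h)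
  obtain ⟨i, j, hij, heq⟩ := Finite.exists_ne_map_eq_of_infinite (fun k : ℕ => Q.f^[k] v)
  rcases lt_or_gt_of_ne hij with h | h
  · exact peel i j h heq
  · exact peel j i h heq.symm

noncomputable def K (v : Fin n) (hv : v ∉ Q.V) : ℕ := Nat.find (Q.chain_exists v hv)

noncomputable def land (v : Fin n) (hv : v ∉ Q.V) : Fin n := Q.f^[Q.K v hv] v

lemma K_pos (v : Fin n) (hv : v ∉ Q.V) : 0 < Q.K v hv :=
  (Nat.find_spec (Q.chain_exists v hv)).1

lemma land_spec (v : Fin n) (hv : v ∉ Q.V) :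
    Q.land v hv ∈ Q.V ∨ Q.land v hv = v :=
  (Nat.find_spec (Q.chain_exists v hv)).2

lemma chain_mid (v : Fin n) (hv : v ∉ Q.V) {i : ℕ} (h1 : 0 < i) (h2 : i < Q.K v hv) :
    Q.f^[i] v ∉ Q.V ∧ Q.f^[i] v ≠ v := by
  have := Nat.find_min (Q.chain_exists v hv) h2
  push_neg at this
  exact this h1

lemma chain_nmem (v : Fin n) (hv : v ∉ Q.V) {i : ℕ} (h2 : i < Q.K v hv) :
    Q.f^[i] v ∉ Q.V := by
  cases Nat.eq_zero_or_pos i with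
  | inl h => subst h; simpa
  | inr h => exact (Q.chain_mid v hv h h2).1

lemma land_ne_r (v : Fin n) (hv : v ∉ Q.V) : Q.land v hv ≠ r := by
  have hK := Q.K_pos v hv
  have : Q.land v hv = Q.f (Q.f^[Q.K v hv - 1] v) := by
    conv_lhs => rw [land, show Q.K v hv = (Q.K v hv - 1) + 1 by omega,
      Function.iterate_succ_apply']
  rw [this]
  exact Q.hnr _ (Q.chain_nmem v hv (by omega))

noncomputable def qIns (v : Fin n) (hv : v ∉ Q.V) : Fin n :=
  if Q.land v hv ∈ Q.V then Q.land v hv else r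

lemma qIns_mem (v : Fin n) (hv : v ∉ Q.V) : Q.qIns v hv ∈ Q.V := by
  rw [qIns]
  split
  · assumption
  · exact Q.hr

/-- predecessor (along arcs) function -/
noncomputable def g : Fin n → Fin n :=
  fun x => if h : ∃ u, u ∉ Q.V ∧ Q.f u = x then h.choose else x

lemma g_spec {x : Fin n} (h : ∃ u, u ∉ Q.V ∧ Q.f u = x) :
    Q.g x ∉ Q.V ∧ Q.f (Q.g x) = x := by
  rw [g, dif_pos h]
  exact h.choose_spec

lemma g_eq {x u : Fin n} (hu : u ∉ Q.V) (hf : Q.f u = x) : Q.g x = u := by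
  obtain ⟨h1, h2⟩ := Q.g_spec ⟨u, hu, hf⟩
  exact Q.hinj _ _ h1 hu (h2.trans hf.symm)

lemma back_exists (t : Fin n) (ht : t ∈ Q.V) :
    ∃ m, ¬∃ u, u ∉ Q.V ∧ Q.f u = Q.g^[m] t := by
  by_contra hcon
  push_neg at hcon
  have hcon' : ∀ m, ∃ u, u ∉ Q.V ∧ Q.f u = Q.g^[m] t := hcon
  have hstep : ∀ m, Q.g^[m + 1] t ∉ Q.V ∧ Q.f (Q.g^[m + 1] t) = Q.g^[m] t := by
    intro m
    rw [Function.iterate_succ_apply']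
    exact Q.g_spec (hcon' m)
  have hshift : ∀ i d, Q.f^[i] (Q.g^[i + d] t) = Q.g^[d] t := by
    intro i
    induction i with
    | zero => simp
    | succ i ih =>
      intro d
      rw [Function.iterate_succ_apply, show i + 1 + d = (i + d) + 1 by omega,
        (hstep (i + d)).2, ih d]
  have hfm : ∀ m, Q.f^[m] (Q.g^[m] t) = t := by
    intro m
    have := hshift m 0
    simpa using this
  have key : ∀ i j, i < j → Q.g^[i] t = Q.g^[j] t → False := by
    intro i j hij heq
    have h1 : t = Q.g^[j - i] t := by
      conv_lhs => rw [← hfm i, heq, show j = i + (j - i) by omega]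
      exact hshift i (j - i)
    have h2 : Q.g^[j - i] t ∉ Q.V := by
      rw [show j - i = (j - i - 1) + 1 by omega]
      exact (hstep (j - i - 1)).1
    rw [← h1] at h2
    exact h2 ht
  obtain ⟨i, j, hij, heq⟩ := Finite.exists_ne_map_eq_of_infinite (fun m : ℕ => Q.g^[m] t)
  rcases lt_or_gt_of_ne hij with h | h
  · exact key i j h heq
  · exact key j i h heq.symm

noncomputable def M (t : Fin n) (ht : t ∈ Q.V) : ℕ := Nat.find (Q.back_exists t ht)

noncomputable def u₀ (t : Fin n) (ht : t ∈ Q.V) : Fin n := Q.g^[Q.M t ht] t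

lemma u₀_nopred (t : Fin n) (ht : t ∈ Q.V) :
    ∀ w, w ∉ Q.V → Q.f w ≠ Q.u₀ t ht := by
  have := Nat.find_spec (Q.back_exists t ht)
  intro w hw hf
  exact this ⟨w, hw, hf⟩

lemma back_step (t : Fin n) (ht : t ∈ Q.V) {m : ℕ} (hm : m < Q.M t ht) :
    Q.g^[m + 1] t ∉ Q.V ∧ Q.f (Q.g^[m + 1] t) = Q.g^[m] t := by
  have := Nat.find_min (Q.back_exists t ht) hm
  simp only [not_not] at this
  rw [Function.iterate_succ_apply']
  exact Q.g_spec this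

lemma u₀_ne_r (t : Fin n) (ht : t ∈ Q.V) (htr : t ≠ r) : Q.u₀ t ht ≠ r := by
  rcases Nat.eq_zero_or_pos (Q.M t ht) with h | h
  · rw [u₀, h]
    simpa using htr
  · rw [u₀, show Q.M t ht = (Q.M t ht - 1) + 1 by omega]
    intro hr
    have := (Q.back_step t ht (m := Q.M t ht - 1) (by omega)).1
    rw [hr] at this
    exact this Q.hr

end P
end S11

namespace S11
namespace P
open Function Classical

variable {n : ℕ} {r : Fin n} (Q : P n r)

noncomputable def conT (v : Fin n) : Fin n := if Q.f v = r then v else Q.f v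

lemma conT_mem {v : Fin n} (hv : v ∈ Q.V) : Q.conT v ∈ Q.V := by
  rw [conT]
  split
  · exact hv
  · exact Q.hfV v hv

lemma conT_ne_r {v : Fin n} (hvr : v ≠ r) : Q.conT v ≠ r := by
  rw [conT]
  split
  · exact hvr
  · assumption

lemma u₀_congr {t t' : Fin n} (h : t = t') (ht : t ∈ Q.V) (ht' : t' ∈ Q.V) :
    Q.u₀ t ht = Q.u₀ t' ht' := by subst h; rfl

lemma min'_congr {α : Type*} [LinearOrder α] {s t : Finset α} (h : s = t)
    (hs : s.Nonempty) (ht : t.Nonempty) : s.min' hs = t.min' ht := by subst h; rfl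

noncomputable def step (v : Fin n) : P n r :=
  if hv : v ∈ Q.V then
    if hvr : v = r then Q
    else Q.con v (Q.u₀ (Q.conT v) (Q.conT_mem hv)) hv hvr
      (Q.u₀_ne_r _ _ (Q.conT_ne_r hvr)) (Q.u₀_nopred _ _)
  else Q.ins v (Q.qIns v hv) hv (Q.qIns_mem v hv)

lemma step_of_nmem {v : Fin n} (hv : v ∉ Q.V) :
    Q.step v = Q.ins v (Q.qIns v hv) hv (Q.qIns_mem v hv) := dif_neg hv

lemma step_of_mem {v : Fin n} (hv : v ∈ Q.V) (hvr : v ≠ r) :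
    Q.step v = Q.con v (Q.u₀ (Q.conT v) (Q.conT_mem hv)) hv hvr
      (Q.u₀_ne_r _ _ (Q.conT_ne_r hvr)) (Q.u₀_nopred _ _) := by
  rw [step, dif_pos hv, dif_neg hvr]

theorem ins_con (v : Fin n) (hv : v ∉ Q.V) :
    (Q.ins v (Q.qIns v hv) hv (Q.qIns_mem v hv)).step v = Q := by
  set q := Q.qIns v hv with hqdef
  set Q' := Q.ins v q hv (Q.qIns_mem v hv) with hQ'
  set t := Q.land v hv with htdef
  set Kv := Q.K v hv with hKdef
  have hKpos : 0 < Kv := Q.K_pos v hv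
  have hvV' : v ∈ Q'.V := Finset.mem_insert_self _ _
  have hvr : v ≠ r := Q.ins_vr hv
  have htK : t = Q.f^[Kv] v := rfl
  have hfv' : Q'.f v = q := by rw [hQ', ins_f, Q.insF_self]
  -- chain elements not in Q'.V
  have hmid' : ∀ i, 0 < i → i < Kv → Q.f^[i] v ∉ Q'.V := by
    intro i h1 h2
    have hm := Q.chain_mid v hv h1 h2
    rw [hQ', ins_V]
    intro hmem
    rcases Finset.mem_insert.mp hmem with h | h
    · exact hm.2 h
    · exact hm.1 h
  have hfmid : ∀ i, 0 < i → i < Kv → Q'.f (Q.f^[i] v) = Q.f^[i + 1] v := by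
    intro i h1 h2
    have hm := Q.chain_mid v hv h1 h2
    rw [hQ', ins_f, Q.insF_other hm.2 (fun h => hm.1 (Q.mem_childSet.mp h).1)]
    exact (Function.iterate_succ_apply' Q.f i v).symm
  have hland' : Q'.conT v = t := by
    have hq2 : q = if Q.land v hv ∈ Q.V then Q.land v hv else r := rfl
    rw [conT, hfv']
    rcases Q.land_spec v hv with h | h
    · have hq3 : q = Q.land v hv := by rw [hq2, if_pos h]
      rw [hq3, if_neg (Q.land_ne_r v hv), htdef]
    · have hlnot : Q.land v hv ∉ Q.V := by rw [h]; exact hv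
      have hq3 : q = r := by rw [hq2, if_neg hlnot]
      rw [hq3, if_pos rfl, htdef, h]
  have htV' : t ∈ Q'.V := by
    rw [← hland']
    exact Q'.conT_mem hvV'
  -- the backward chain in Q'
  have hchain : ∀ m, m ≤ Kv - 1 → Q'.g^[m] t = Q.f^[Kv - m] v := by
    intro m
    induction m with
    | zero => intro _; simpa using htK
    | succ m ih =>
      intro hm
      rw [Function.iterate_succ_apply', ih (by omega)]
      apply Q'.g_eq
      · exact hmid' (Kv - (m + 1)) (by omega) (by omega)
      · rw [hfmid (Kv - (m + 1)) (by omega) (by omega), show Kv - (m + 1) + 1 = Kv - m by omega]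
  have hnopred : ¬∃ u, u ∉ Q'.V ∧ Q'.f u = Q.f^[1] v := by
    rintro ⟨u, hu, hfu⟩
    have huv : u ≠ v := fun h => hu (h ▸ hvV')
    have huV : u ∉ Q.V := fun h => hu (by rw [hQ', ins_V]; exact Finset.mem_insert_of_mem h)
    rw [hQ', ins_f, Q.insF_other huv (fun h => huV (Q.mem_childSet.mp h).1)] at hfu
    rw [Function.iterate_one] at hfu
    exact huv (Q.hinj u v huV hv hfu)
  have hM : Q'.M t htV' = Kv - 1 := by
    unfold M
    apply le_antisymm
    · apply Nat.find_le
      rw [hchain (Kv - 1) le_rfl, show Kv - (Kv - 1) = 1 by omega]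
      exact hnopred
    · rw [Nat.le_find_iff]
      intro m hm
      simp only [not_not]
      rw [hchain m (by omega)]
      refine ⟨Q.f^[Kv - m - 1] v, hmid' _ (by omega) (by omega), ?_⟩
      rw [hfmid _ (by omega) (by omega), show Kv - m - 1 + 1 = Kv - m by omega]
  have hu₀val : Q'.u₀ (Q'.conT v) (Q'.conT_mem hvV') = Q.f v := by
    rw [Q'.u₀_congr hland' _ htV']
    rw [u₀, hM, hchain (Kv - 1) le_rfl, show Kv - (Kv - 1) = 1 by omega,
      Function.iterate_one]
  rw [Q'.step_of_mem hvV' hvr]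
  apply P.ext'
  · show (Q'.V).erase v = Q.V
    rw [hQ', ins_V, Finset.erase_insert hv]
  · funext w
    show Q'.conF v (Q'.u₀ (Q'.conT v) (Q'.conT_mem hvV')) w = Q.f w
    rw [hu₀val]
    by_cases hwv : w = v
    · rw [hwv, Q'.conF_self]
    · by_cases hch : w ∈ Q'.childSet v
      · have hch2 : w ∈ Q.childSet q := by
          rwa [hQ', Q.childSet_ins_v hv (Q.qIns_mem v hv)] at hch
        rw [Q'.conF_child hch hwv, hfv']
        exact (Q.mem_childSet.mp hch2).2.2.symm
      · rw [Q'.conF_other hwv hch, hQ', ins_f]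
        have hch2 : w ∉ Q.childSet q := by
          rwa [hQ', Q.childSet_ins_v hv (Q.qIns_mem v hv)] at hch
        exact Q.insF_other hwv hch2

end P
end S11

namespace S11
namespace P
open Function Classical

variable {n : ℕ} {r : Fin n} (Q : P n r)

theorem con_step (v : Fin n) (hv : v ∈ Q.V) (hcs : Q.childSet (Q.f v) = {v}) :
    (Q.step v).step v = Q := by
  have hvr : v ≠ r := by
    have : v ∈ Q.childSet (Q.f v) := hcs ▸ Finset.mem_singleton_self v
    exact (Q.mem_childSet.mp this).2.1
  have hfvne : Q.f v ≠ v := Q.f_ne_self hv hvr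
  have htV : Q.conT v ∈ Q.V := Q.conT_mem hv
  set t := Q.conT v with htdef
  set Mv := Q.M t htV with hMdef
  set u0 := Q.u₀ t htV with hu0def
  rw [Q.step_of_mem hv hvr]
  set Q'' := Q.con v (Q.u₀ (Q.conT v) (Q.conT_mem hv)) hv hvr
      (Q.u₀_ne_r _ _ (Q.conT_ne_r hvr)) (Q.u₀_nopred _ _) with hQ''
  have hV'' : Q''.V = Q.V.erase v := rfl
  have hf'' : Q''.f = Q.conF v u0 := rfl
  have hv'' : v ∉ Q''.V := by
    rw [hV'']
    simp
  -- the forward chain in Q''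
  have hback : ∀ m, m < Mv → Q.g^[m + 1] t ∉ Q.V ∧ Q.f (Q.g^[m + 1] t) = Q.g^[m] t :=
    fun m hm => Q.back_step t htV hm
  have hchain2 : ∀ m, m ≤ Mv → Q''.f^[m + 1] v = Q.g^[Mv - m] t := by
    intro m
    induction m with
    | zero =>
      intro _
      rw [Function.iterate_one, hf'', Q.conF_self]
      rfl
    | succ m ih =>
      intro hm
      rw [show m + 1 + 1 = (m + 1) + 1 from rfl, Function.iterate_succ_apply', ih (by omega)]
      have hx := hback (Mv - m - 1) (by omega)
      rw [show (Mv - m - 1) + 1 = Mv - m by omega] at hx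
      rw [hf'', Q.conF_other (fun h => hx.1 (by rw [h]; exact hv)) (fun h => hx.1 (Q.mem_childSet.mp h).1)]
      rw [hx.2, show Mv - m - 1 = Mv - (m + 1) by omega]
  have hmid2 : ∀ i, 0 < i → i < Mv + 1 → Q''.f^[i] v ∉ Q.V := by
    intro i h1 h2
    rw [show i = (i - 1) + 1 by omega, hchain2 (i - 1) (by omega)]
    have := (hback (Mv - (i - 1) - 1) (by omega)).1
    rw [show (Mv - (i - 1) - 1) + 1 = Mv - (i - 1) by omega] at this
    exact this
  have hlandval : Q''.f^[Mv + 1] v = t := by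
    rw [hchain2 Mv le_rfl]
    simp
  have htcase : (t = v ∧ Q.f v = r) ∨ (t ∈ Q''.V ∧ t = Q.f v) := by
    rw [htdef, conT]
    by_cases h : Q.f v = r
    · rw [if_pos h]
      exact Or.inl ⟨rfl, h⟩
    · rw [if_neg h]
      refine Or.inr ⟨?_, rfl⟩
      rw [hV'', Finset.mem_erase]
      exact ⟨hfvne, Q.hfV v hv⟩
  have hK2 : Q''.K v hv'' = Mv + 1 := by
    unfold K
    apply le_antisymm
    · apply Nat.find_le
      refine ⟨Nat.succ_pos _, ?_⟩
      rw [hlandval]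
      rcases htcase with ⟨h1, _⟩ | ⟨h1, _⟩
      · exact Or.inr h1
      · exact Or.inl h1
    · rw [Nat.le_find_iff]
      intro i hi
      simp only [not_and, not_or]
      intro hipos
      constructor
      · intro hmem
        rw [hV''] at hmem
        exact hmid2 i hipos (by omega) (Finset.mem_erase.mp hmem).2
      · intro heqv
        exact hmid2 i hipos (by omega) (by rw [heqv]; exact hv)
  have hland2 : Q''.land v hv'' = t := by
    rw [land, hK2]
    exact hlandval
  have hq2 : Q''.qIns v hv'' = Q.f v := by
    rw [qIns, hland2]
    rcases htcase with ⟨h1, h2⟩ | ⟨h1, h2⟩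
    · rw [if_neg (by rw [h1]; exact hv''), h2]
    · rw [if_pos h1, h2]
  -- childSet computation
  have hcseq : Q''.childSet (Q.f v) = Q.childSet v := by
    ext u
    rw [mem_childSet, Q.mem_childSet, hV'', hf'']
    constructor
    · rintro ⟨hu, hur, hfu⟩
      obtain ⟨huv, huV⟩ := Finset.mem_erase.mp hu
      by_cases hch : u ∈ Q.childSet v
      · exact Q.mem_childSet.mp hch
      · rw [Q.conF_other huv hch] at hfu
        have : u ∈ Q.childSet (Q.f v) := Q.mem_childSet.mpr ⟨huV, hur, hfu⟩
        rw [hcs, Finset.mem_singleton] at this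
        exact absurd this huv
    · rintro ⟨hu, hur, hfu⟩
      have huv : u ≠ v := by
        intro h
        rw [h] at hfu
        exact hfvne hfu
      refine ⟨Finset.mem_erase.mpr ⟨huv, hu⟩, hur, ?_⟩
      rw [Q.conF_child (Q.mem_childSet.mpr ⟨hu, hur, hfu⟩) huv]
  rw [Q''.step_of_nmem hv'']
  apply P.ext'
  · show insert v Q''.V = Q.V
    rw [hV'', Finset.insert_erase hv]
  · funext w
    show Q''.insF v (Q''.qIns v hv'') w = Q.f w
    rw [hq2]
    by_cases hwv : w = v
    · rw [hwv, Q''.insF_self]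
    · by_cases hch : w ∈ Q''.childSet (Q.f v)
      · rw [Q''.insF_child hch hwv]
        rw [hcseq] at hch
        exact (Q.mem_childSet.mp hch).2.2.symm
      · rw [Q''.insF_other hwv hch, hf'']
        rw [hcseq] at hch
        exact Q.conF_other hwv hch

end P
end S11

namespace S11
open SimpleGraph Function Classical

namespace P

variable {n : ℕ} {r : Fin n} (Q : P n r)

lemma bad_mem_V {v : Fin n} (hb : v ∈ Q.bad) (hv : v ∈ Q.V) :
    v ≠ r ∧ Q.childSet (Q.f v) = {v} := by
  rcases Q.mem_bad.mp hb with h | h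
  · exact absurd hv h
  · have hm : v ∈ Q.childSet (Q.f v) := h ▸ Finset.mem_singleton_self v
    exact ⟨(Q.mem_childSet.mp hm).2.1, h⟩

lemma step_bad {v : Fin n} (hb : v ∈ Q.bad) : (Q.step v).bad = Q.bad := by
  by_cases hv : v ∈ Q.V
  · obtain ⟨hvr, hcs⟩ := Q.bad_mem_V hb hv
    have hrt := Q.con_step v hv hcs
    have hv'' : v ∉ (Q.step v).V := by
      rw [Q.step_of_mem hv hvr]
      show v ∉ Q.V.erase v
      simp
    have h1 : (Q.step v).step v
        = (Q.step v).ins v ((Q.step v).qIns v hv'') hv'' ((Q.step v).qIns_mem v hv'') :=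
      (Q.step v).step_of_nmem hv''
    have h2 := (Q.step v).bad_ins hv'' ((Q.step v).qIns_mem v hv'')
    calc (Q.step v).bad = ((Q.step v).step v).bad := by rw [h1, h2]
    _ = Q.bad := by rw [hrt]
  · rw [Q.step_of_nmem hv]
    exact Q.bad_ins hv (Q.qIns_mem v hv)

noncomputable def psi (hbad : Q.bad.Nonempty) : P n r := Q.step (Q.bad.min' hbad)

lemma psi_bad (hb : Q.bad.Nonempty) : (Q.psi hb).bad = Q.bad :=
  Q.step_bad (Q.bad.min'_mem hb)

lemma psi_congr {Q Q' : P n r} (h : Q = Q') (hb : Q.bad.Nonempty) (hb' : Q'.bad.Nonempty) :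
    Q.psi hb = Q'.psi hb' := by subst h; rfl

theorem psi_psi (hb : Q.bad.Nonempty) (hb' : (Q.psi hb).bad.Nonempty) :
    (Q.psi hb).psi hb' = Q := by
  have hbv := Q.bad.min'_mem hb
  have hbb : (Q.psi hb).bad = Q.bad := Q.psi_bad hb
  have hmin : (Q.psi hb).bad.min' hb' = Q.bad.min' hb := min'_congr hbb hb' hb
  rw [psi, hmin]
  by_cases hv : Q.bad.min' hb ∈ Q.V
  · obtain ⟨hvr, hcs⟩ := Q.bad_mem_V hbv hv
    exact Q.con_step _ hv hcs
  · rw [show Q.psi hb = Q.step (Q.bad.min' hb) from rfl, Q.step_of_nmem hv]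
    exact Q.ins_con _ hv

lemma psi_card (hb : Q.bad.Nonempty) :
    (Q.psi hb).V.card = Q.V.card + 1 ∨ Q.V.card = (Q.psi hb).V.card + 1 := by
  by_cases hv : Q.bad.min' hb ∈ Q.V
  · right
    have hvr := (Q.bad_mem_V (Q.bad.min'_mem hb) hv).1
    rw [show Q.psi hb = Q.step (Q.bad.min' hb) from rfl, Q.step_of_mem hv hvr]
    show Q.V.card = (Q.V.erase _).card + 1
    rw [Finset.card_erase_of_mem hv]
    have : 0 < Q.V.card := Finset.card_pos.mpr ⟨_, hv⟩
    omega
  · left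
    rw [show Q.psi hb = Q.step (Q.bad.min' hb) from rfl, Q.step_of_nmem hv]
    show (insert _ Q.V).card = Q.V.card + 1
    rw [Finset.card_insert_of_notMem hv]

end P

variable {n : ℕ} {r : Fin n}

lemma Dcond_toG (Q : P n r) :
    ((toG Q).V ≠ Finset.univ ∨ ∃ v, (children (toG Q).tree (toG Q).root v).ncard = 1) ↔
      Q.bad.Nonempty := by
  have hch : ∀ q : Fin n, children (toG Q).tree (toG Q).root q = ↑(Q.childSet q) := by
    intro q
    rw [children_eq (toG Q) q]
    ext w
    simp only [Set.mem_setOf_eq, Finset.coe_filter, Finset.mem_coe]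
    constructor
    · rintro ⟨h1, h2, h3⟩
      exact Q.mem_childSet.mpr ⟨h1, h2, by rw [← par_toG Q w h1]; exact h3⟩
    · intro h
      obtain ⟨h1, h2, h3⟩ := Q.mem_childSet.mp h
      exact ⟨h1, h2, by rw [par_toG Q w h1]; exact h3⟩
  constructor
  · rintro (h | ⟨q, hq⟩)
    · obtain ⟨v, hv⟩ : ∃ v, v ∉ Q.V := by
        by_contra hc
        push_neg at hc
        exact h (Finset.eq_univ_iff_forall.mpr hc)
      exact ⟨v, Q.mem_bad.mpr (Or.inl hv)⟩
    · rw [hch q, Set.ncard_coe_finset] at hq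
      obtain ⟨w, hw⟩ := Finset.card_eq_one.mp hq
      have hwm : w ∈ Q.childSet q := hw ▸ Finset.mem_singleton_self w
      obtain ⟨h1, h2, h3⟩ := Q.mem_childSet.mp hwm
      refine ⟨w, Q.mem_bad.mpr (Or.inr ?_)⟩
      rw [h3]
      exact hw
  · rintro ⟨v, hv⟩
    rcases Q.mem_bad.mp hv with h | h
    · refine Or.inl (fun hu => h ?_)
      have : (toG Q).V = Finset.univ := hu
      rw [toG_V] at this
      rw [this]
      exact Finset.mem_univ v
    · refine Or.inr ⟨Q.f v, ?_⟩
      rw [hch, Set.ncard_coe_finset, h, Finset.card_singleton]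

lemma Dcond_c (c : GConfig n) (h : c.root = r) :
    (c.V ≠ Finset.univ ∨ ∃ v, (children c.tree c.root v).ncard = 1) ↔
      (fromG c h).bad.Nonempty := by
  have h2 := Dcond_toG (fromG c h)
  rw [toG_fromG c h] at h2
  exact h2

end S11


/-- There is a sign-reversing involution on the `G`-configurations of size `n` (root `1`)
that are not lone-child-avoiding spanning trees, i.e. those having an arc vertex or a tree
vertex with exactly one child: it changes the number of tree vertices by exactly one,
hence reverses the weight `(-1)^{n-k}`. -/
theorem stmt11 (n : ℕ) (hn : 0 < n) :
    ∃ φ : {c : GConfig n // c.root = ⟨0, hn⟩ ∧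
        (c.V ≠ Finset.univ ∨ ∃ v, (children c.tree c.root v).ncard = 1)} →
      {c : GConfig n // c.root = ⟨0, hn⟩ ∧
        (c.V ≠ Finset.univ ∨ ∃ v, (children c.tree c.root v).ncard = 1)},
      (∀ c, φ (φ c) = c) ∧
      (∀ c, (φ c).1.V.card = c.1.V.card + 1 ∨ c.1.V.card = (φ c).1.V.card + 1) := by
  classical
  have key : ∀ (Q : S11.P n ⟨0, hn⟩) (hb : Q.bad.Nonempty)
      (hb2 : (S11.fromG (S11.toG (Q.psi hb)) rfl).bad.Nonempty),
      (S11.fromG (S11.toG (Q.psi hb)) rfl).psi hb2 = Q := by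
    intro Q hb hb2
    have e : S11.fromG (S11.toG (Q.psi hb)) rfl = Q.psi hb := S11.fromG_toG _
    have hb3 : (Q.psi hb).bad.Nonempty := e ▸ hb2
    rw [S11.P.psi_congr e hb2 hb3]
    exact Q.psi_psi hb hb3
  refine ⟨fun c => ⟨S11.toG ((S11.fromG c.1 c.2.1).psi ((S11.Dcond_c c.1 c.2.1).mp c.2.2)),
    rfl,
    (S11.Dcond_c _ rfl).mpr (by
      rw [S11.fromG_toG]
      show (S11.P.bad (r := ⟨0, hn⟩) _).Nonempty
      rw [S11.P.psi_bad]
      exact (S11.Dcond_c c.1 c.2.1).mp c.2.2)⟩, ?_, ?_⟩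
  · intro c
    apply Subtype.ext
    show S11.toG _ = c.1
    dsimp only
    refine (congrArg S11.toG (key (S11.fromG c.1 c.2.1) ((S11.Dcond_c c.1 c.2.1).mp c.2.2) _)).trans ?_
    exact S11.toG_fromG c.1 c.2.1
  · intro c
    exact S11.P.psi_card (S11.fromG c.1 c.2.1) ((S11.Dcond_c c.1 c.2.1).mp c.2.2)
end

section
/- For every n ≥ 1, \sum_{k=1}^{n} (-1)^{n-k} * C(n,k) * ((n-1)!/(k-1)!) * k^{k-1} ≥ 0. -/
open Finset



lemma count_lemma (n : ℕ) (A : Finset (Fin n)) :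
    (univ.filter (fun h : Fin n → Fin n => ∀ x ∈ A, ∀ y, h y = h x → y = x)).card
      = n.descFactorial A.card * (n - A.card) ^ (n - A.card) := by
  classical
  set T : Finset (↥A → Fin n) := univ.filter (fun e => Function.Injective e) with hT
  have hmaps : ∀ h ∈ univ.filter (fun h : Fin n → Fin n => ∀ x ∈ A, ∀ y, h y = h x → y = x),
      (fun x : ↥A => h ↑x) ∈ T := by
    intro h hh
    rw [mem_filter] at hh ⊢
    refine ⟨mem_univ _, fun x₁ x₂ hx => ?_⟩
    exact Subtype.ext (hh.2 x₂ x₂.2 x₁ hx)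
  rw [Finset.card_eq_sum_card_fiberwise hmaps]
  have hfib : ∀ e ∈ T, ((univ.filter (fun h : Fin n → Fin n => ∀ x ∈ A, ∀ y, h y = h x → y = x)).filter
      (fun h => (fun x : ↥A => h ↑x) = e)).card = (n - A.card) ^ (n - A.card) := by
    intro e he
    rw [hT, mem_filter] at he
    have einj : Function.Injective e := he.2
    set C : Finset (Fin n) := univ.image e with hC
    have hCcard : C.card = A.card := by
      rw [hC, Finset.card_image_of_injective _ einj, card_univ, Fintype.card_coe]
    have htarget : (Finset.univ : Finset (↥(Aᶜ) → ↥(Cᶜ))).card = (n - A.card) ^ (n - A.card) := by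
      rw [card_univ, Fintype.card_fun, Fintype.card_coe, Fintype.card_coe,
        Finset.card_compl, Finset.card_compl, Fintype.card_fin, hCcard]
    rw [← htarget]
    refine Finset.card_bij'
      (fun h hh => fun y : ↥(Aᶜ) => (⟨h ↑y, by
        rw [mem_filter, mem_filter] at hh
        obtain ⟨⟨-, hP⟩, hres⟩ := hh
        rw [Finset.mem_compl, hC]
        intro hmem
        obtain ⟨x, -, hx⟩ := Finset.mem_image.1 hmem
        have hex : e x = h ↑x := (congrFun hres x).symm
        have : (↑y : Fin n) = ↑x := hP x x.2 ↑y (by rw [← hx, hex])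
        have hyA : (↑y : Fin n) ∈ Aᶜ := y.2
        rw [Finset.mem_compl] at hyA
        exact hyA (this ▸ x.2)⟩ : ↥(Cᶜ)))
      (fun g _ => fun z : Fin n =>
        if hz : z ∈ A then e ⟨z, hz⟩ else ↑(g ⟨z, by simpa using hz⟩))
      ?_ ?_ ?_ ?_
    · intro h hh; exact mem_univ _
    · -- j maps into the fiber
      intro g _
      rw [mem_filter, mem_filter]
      refine ⟨⟨mem_univ _, ?_⟩, ?_⟩
      · intro x hx y hxy
        dsimp only at hxy
        by_cases hy : y ∈ A
        · rw [dif_pos hy, dif_pos hx] at hxy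
          exact congrArg Subtype.val (einj hxy)
        · rw [dif_neg hy, dif_pos hx] at hxy
          exfalso
          have hmem : (↑(g ⟨y, by simpa using hy⟩) : Fin n) ∈ Cᶜ := (g _).2
          rw [Finset.mem_compl] at hmem
          exact hmem (hxy ▸ Finset.mem_image_of_mem e (mem_univ (⟨x, hx⟩ : ↥A)))
      · funext x
        simp [x.2]
    · -- left inverse
      intro h hh
      rw [mem_filter] at hh
      funext z
      dsimp only
      by_cases hz : z ∈ A
      · rw [dif_pos hz]
        exact (congrFun hh.2 ⟨z, hz⟩).symm
      · rw [dif_neg hz]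
    · -- right inverse
      intro g _
      funext y
      apply Subtype.ext
      have hy : (↑y : Fin n) ∉ A := Finset.mem_compl.1 y.2
      dsimp only
      rw [dif_neg hy]
  rw [Finset.sum_congr rfl hfib, Finset.sum_const]
  have hTcard : T.card = n.descFactorial A.card := by
    rw [hT, ← Fintype.card_subtype]
    rw [Fintype.card_congr (Equiv.subtypeInjectiveEquivEmbedding ↥A (Fin n))]
    rw [Fintype.card_embedding_eq, Fintype.card_coe, Fintype.card_fin]
  rw [hTcard, smul_eq_mul]

lemma identity_lemma (n : ℕ) :
    ((univ.filter (fun h : Fin n → Fin n => ∀ x, ∃ y, y ≠ x ∧ h y = h x)).card : ℤ)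
      = ∑ a ∈ range (n + 1),
          (-1 : ℤ) ^ a * ((n.choose a * (n.descFactorial a * (n - a) ^ (n - a)) : ℕ) : ℤ) := by
  classical
  have step1 : ((univ.filter (fun h : Fin n → Fin n => ∀ x, ∃ y, y ≠ x ∧ h y = h x)).card : ℤ)
      = ∑ h : Fin n → Fin n,
          ∑ A ∈ (univ.filter (fun x => ∀ y, h y = h x → y = x)).powerset, (-1 : ℤ) ^ A.card := by
    rw [Finset.card_filter]
    push_cast
    refine Finset.sum_congr rfl fun h _ => ?_
    rw [Finset.sum_powerset_neg_one_pow_card]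
    congr 1
    simp only [eq_iff_iff]
    rw [Finset.filter_eq_empty_iff]
    constructor
    · intro hP x _
      obtain ⟨y, hy1, hy2⟩ := hP x
      intro hall
      exact hy1 (hall y hy2)
    · intro hP x
      obtain ⟨y, hy⟩ := not_forall.1 (hP (mem_univ x))
      rw [Classical.not_imp] at hy
      exact ⟨y, hy.2, hy.1⟩
  rw [step1]
  have step2 : ∀ h : Fin n → Fin n,
      ∑ A ∈ (univ.filter (fun x => ∀ y, h y = h x → y = x)).powerset, (-1 : ℤ) ^ A.card
      = ∑ A ∈ (univ : Finset (Fin n)).powerset,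
          if A ⊆ univ.filter (fun x => ∀ y, h y = h x → y = x) then (-1 : ℤ) ^ A.card else 0 := by
    intro h
    rw [← Finset.sum_filter]
    congr 1
    ext A
    simp [Finset.mem_powerset]
  simp_rw [step2]
  rw [Finset.sum_comm]
  have step3 : ∀ A ∈ (univ : Finset (Fin n)).powerset,
      (∑ h : Fin n → Fin n,
        if A ⊆ univ.filter (fun x => ∀ y, h y = h x → y = x) then (-1 : ℤ) ^ A.card else 0)
      = (-1 : ℤ) ^ A.card * ((n.descFactorial A.card * (n - A.card) ^ (n - A.card) : ℕ) : ℤ) := by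
    intro A _
    rw [← Finset.sum_filter]
    rw [Finset.sum_const]
    have : (univ.filter fun h : Fin n → Fin n =>
        A ⊆ univ.filter (fun x => ∀ y, h y = h x → y = x))
        = univ.filter (fun h : Fin n → Fin n => ∀ x ∈ A, ∀ y, h y = h x → y = x) := by
      apply Finset.filter_congr
      intro h _
      simp only [eq_iff_iff, Finset.subset_iff, Finset.mem_filter, mem_univ, true_and]
    rw [this, count_lemma n A, nsmul_eq_mul]
    push_cast
    ring
  rw [Finset.sum_congr rfl step3]
  have := Finset.sum_powerset_apply_card
    (f := fun a => (-1 : ℤ) ^ a * ((n.descFactorial a * (n - a) ^ (n - a) : ℕ) : ℤ))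
    (x := (univ : Finset (Fin n)))
  rw [this, card_univ, Fintype.card_fin]
  refine Finset.sum_congr rfl fun a _ => ?_
  rw [nsmul_eq_mul]
  push_cast
  ring


section EvenPart

variable (m : ℕ)

private def esum : (Fin m ⊕ Fin m) ≃ Fin (m + m) := finSumFinEquiv

private def img (σ : Equiv.Perm (Fin (m + m))) : Finset (Fin (m + m)) :=
  univ.image (fun j : Fin m => σ (esum m (Sum.inl j)))

lemma img_inj (σ : Equiv.Perm (Fin (m + m))) :
    Function.Injective (fun j : Fin m => σ (esum m (Sum.inl j))) := by
  intro a b hab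
  exact Sum.inl_injective ((esum m).injective (σ.injective hab))

lemma bcard (σ : Equiv.Perm (Fin (m + m))) : ((img m σ)ᶜ).card = m := by
  rw [Finset.card_compl, img, Finset.card_image_of_injective _ (img_inj m σ),
    card_univ, Fintype.card_fin, Fintype.card_fin]
  omega

private noncomputable def iso (σ : Equiv.Perm (Fin (m + m))) :
    Fin m ≃o ↥((img m σ)ᶜ) := Finset.orderIsoOfFin _ (bcard m σ)

lemma mem_B (σ : Equiv.Perm (Fin (m + m))) (i : Fin m) :
    σ (esum m (Sum.inr i)) ∈ (img m σ)ᶜ := by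
  rw [Finset.mem_compl, img, Finset.mem_image]
  rintro ⟨j, -, hj⟩
  have := (esum m).injective (σ.injective hj)
  simp at this

private noncomputable def rk (σ : Equiv.Perm (Fin (m + m))) : Fin m → Fin m :=
  fun i => (iso m σ).symm ⟨σ (esum m (Sum.inr i)), mem_B m σ i⟩

lemma rk_surj (σ : Equiv.Perm (Fin (m + m))) : Function.Surjective (rk m σ) := by
  apply Finite.surjective_of_injective
  intro a b hab
  have : (⟨σ (esum m (Sum.inr a)), mem_B m σ a⟩ : ↥((img m σ)ᶜ))
      = ⟨σ (esum m (Sum.inr b)), mem_B m σ b⟩ := (iso m σ).symm.injective hab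
  have := Subtype.ext_iff.1 this
  exact Sum.inr_injective ((esum m).injective (σ.injective this))

private noncomputable def Phi (σ : Equiv.Perm (Fin (m + m))) : Fin (m + m) → Fin (m + m) :=
  fun z => Sum.elim (fun j => σ (esum m (Sum.inl j)))
    (fun i => σ (esum m (Sum.inl (rk m σ i)))) ((esum m).symm z)

lemma Phi_apply_inl (σ : Equiv.Perm (Fin (m + m))) (j : Fin m) :
    Phi m σ (esum m (Sum.inl j)) = σ (esum m (Sum.inl j)) := by
  rw [Phi, Equiv.symm_apply_apply]; rfl

lemma Phi_apply_inr (σ : Equiv.Perm (Fin (m + m))) (i : Fin m) :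
    Phi m σ (esum m (Sum.inr i)) = σ (esum m (Sum.inl (rk m σ i))) := by
  rw [Phi, Equiv.symm_apply_apply]; rfl

lemma Phi_nsf (σ : Equiv.Perm (Fin (m + m))) :
    ∀ x, ∃ y, y ≠ x ∧ Phi m σ y = Phi m σ x := by
  intro x
  rcases hs : (esum m).symm x with j | i
  · -- x = esum (inl j)
    have hx : x = esum m (Sum.inl j) := by
      rw [← hs, Equiv.apply_symm_apply]
    obtain ⟨i, hi⟩ := rk_surj m σ j
    refine ⟨esum m (Sum.inr i), ?_, ?_⟩
    · rw [hx]
      intro hcon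
      have := (esum m).injective hcon
      simp at this
    · rw [hx, Phi_apply_inl, Phi_apply_inr, hi]
  · have hx : x = esum m (Sum.inr i) := by
      rw [← hs, Equiv.apply_symm_apply]
    refine ⟨esum m (Sum.inl (rk m σ i)), ?_, ?_⟩
    · rw [hx]
      intro hcon
      have := (esum m).injective hcon
      simp at this
    · rw [hx, Phi_apply_inl, Phi_apply_inr]

lemma orderIsoOfFin_coe_congr {α : Type*} [LinearOrder α] {s t : Finset α} (h : s = t)
    {k : ℕ} (hs : s.card = k) (ht : t.card = k) (i : Fin k) :
    (↑(s.orderIsoOfFin hs i) : α) = ↑(t.orderIsoOfFin ht i) := by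
  subst h; rfl

lemma Phi_inj : Function.Injective (Phi m) := by
  intro σ₁ σ₂ H
  have hA : ∀ j : Fin m, σ₁ (esum m (Sum.inl j)) = σ₂ (esum m (Sum.inl j)) := by
    intro j
    rw [← Phi_apply_inl m σ₁ j, ← Phi_apply_inl m σ₂ j, H]
  have himg : img m σ₁ = img m σ₂ := by
    rw [img, img]
    congr 1
    funext j
    exact hA j
  have hiso : ∀ i : Fin m, (↑(iso m σ₁ i) : Fin (m + m)) = ↑(iso m σ₂ i) := by
    intro i
    exact orderIsoOfFin_coe_congr (by rw [himg]) _ _ i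
  have hvr : ∀ i : Fin m, σ₁ (esum m (Sum.inr i)) = ↑(iso m σ₁ (rk m σ₁ i)) := by
    intro i
    rw [rk, OrderIso.apply_symm_apply]
  have hvr2 : ∀ i : Fin m, σ₂ (esum m (Sum.inr i)) = ↑(iso m σ₂ (rk m σ₂ i)) := by
    intro i
    rw [rk, OrderIso.apply_symm_apply]
  have hrk : ∀ i : Fin m, rk m σ₁ i = rk m σ₂ i := by
    intro i
    have h1 : σ₁ (esum m (Sum.inl (rk m σ₁ i))) = σ₂ (esum m (Sum.inl (rk m σ₂ i))) := by
      rw [← Phi_apply_inr m σ₁ i, ← Phi_apply_inr m σ₂ i, H]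
    rw [← hA (rk m σ₂ i)] at h1
    exact Sum.inl_injective ((esum m).injective (σ₁.injective h1))
  refine Equiv.ext fun x => ?_
  rcases hs : (esum m).symm x with j | i
  · have hx : x = esum m (Sum.inl j) := by rw [← hs, Equiv.apply_symm_apply]
    rw [hx]; exact hA j
  · have hx : x = esum m (Sum.inr i) := by rw [← hs, Equiv.apply_symm_apply]
    rw [hx, hvr i, hvr2 i, hrk i, hiso (rk m σ₂ i)]

lemma even_lower (m : ℕ) :
    (m + m).factorial ≤ (univ.filter
      (fun h : Fin (m + m) → Fin (m + m) => ∀ x, ∃ y, y ≠ x ∧ h y = h x)).card := by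
  classical
  have h1 : (m + m).factorial = Fintype.card (Equiv.Perm (Fin (m + m))) := by
    rw [Fintype.card_perm, Fintype.card_fin]
  have h2 : (univ.filter
      (fun h : Fin (m + m) → Fin (m + m) => ∀ x, ∃ y, y ≠ x ∧ h y = h x)).card
      = Fintype.card {h : Fin (m + m) → Fin (m + m) // ∀ x, ∃ y, y ≠ x ∧ h y = h x} := by
    rw [Fintype.card_subtype]
  rw [h1, h2]
  apply Fintype.card_le_of_injective
    (fun σ => ⟨Phi m σ, Phi_nsf m σ⟩)
  intro σ₁ σ₂ hσ
  exact Phi_inj m (by simpa using hσ)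

end EvenPart


lemma term_eq (n k : ℕ) (h1 : 1 ≤ k) (h2 : k ≤ n) :
    n.choose (n - k) * (n.descFactorial (n - k) * (n - (n - k)) ^ (n - (n - k)))
      = n * (n.choose k * (((n - 1).factorial / (k - 1).factorial) * k ^ (k - 1))) := by
  have hk' : n - (n - k) = k := by omega
  rw [hk', Nat.choose_symm h2]
  have key : n.descFactorial (n - k) * k ^ k
      = n * (((n - 1).factorial / (k - 1).factorial) * k ^ (k - 1)) := by
    apply Nat.eq_of_mul_eq_mul_right (Nat.factorial_pos k)
    have hkf : k * (k - 1).factorial = k.factorial := Nat.mul_factorial_pred (by omega)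
    have hq : (n - 1).factorial / (k - 1).factorial * (k - 1).factorial = (n - 1).factorial :=
      Nat.div_mul_cancel (Nat.factorial_dvd_factorial (by omega))
    have hnf : n * (n - 1).factorial = n.factorial := Nat.mul_factorial_pred (by omega)
    have hpow : k ^ (k - 1) * k = k ^ k := by
      have h := (pow_succ k (k - 1)).symm
      rwa [Nat.sub_add_cancel h1] at h
    have hD : k.factorial * n.descFactorial (n - k) = n.factorial := by
      have := Nat.factorial_mul_descFactorial (Nat.sub_le n k)
      rwa [hk'] at this
    calc n.descFactorial (n - k) * k ^ k * k.factorial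
        = (k.factorial * n.descFactorial (n - k)) * k ^ k := by ring
      _ = n.factorial * k ^ k := by rw [hD]
      _ = (n * (n - 1).factorial) * k ^ k := by rw [hnf]
      _ = (n * ((n - 1).factorial / (k - 1).factorial * (k - 1).factorial)) * k ^ k := by rw [hq]
      _ = n * ((n - 1).factorial / (k - 1).factorial * (k ^ (k - 1) * k)) * (k - 1).factorial := by
          rw [hpow]; ring
      _ = n * ((n - 1).factorial / (k - 1).factorial * k ^ (k - 1)) * (k * (k - 1).factorial) := by
          ring
      _ = n * ((n - 1).factorial / (k - 1).factorial * k ^ (k - 1)) * k.factorial := by rw [hkf]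
  calc n.choose k * (n.descFactorial (n - k) * k ^ k)
      = n.choose k * (n * (((n - 1).factorial / (k - 1).factorial) * k ^ (k - 1))) := by rw [key]
    _ = n * (n.choose k * (((n - 1).factorial / (k - 1).factorial) * k ^ (k - 1))) := by ring

lemma range_split (n : ℕ) : range (n + 1) = insert 0 (Icc 1 n) := by
  ext a
  simp only [mem_range, mem_insert, mem_Icc]
  omega


/-- For all `n ≥ 1`, `∑_{k=1}^n (-1)^{n-k} C(n,k) ((n-1)!/(k-1)!) k^{k-1} ≥ 0`. -/
theorem stmt13 (n : ℕ) (hn : 1 ≤ n) :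
    0 ≤ ∑ k ∈ Finset.Icc 1 n, (-1 : ℤ) ^ (n - k) * (n.choose k) *
      (((n - 1).factorial / (k - 1).factorial : ℕ) : ℤ) * (k : ℤ) ^ (k - 1) := by
  classical
  set S : ℤ := ∑ k ∈ Finset.Icc 1 n, (-1 : ℤ) ^ (n - k) * (n.choose k) *
      (((n - 1).factorial / (k - 1).factorial : ℕ) : ℤ) * (k : ℤ) ^ (k - 1) with hSdef
  set f : ℕ → ℤ := fun a => (-1 : ℤ) ^ a *
      ((n.choose a * (n.descFactorial a * (n - a) ^ (n - a)) : ℕ) : ℤ) with hfdef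
  set N : ℕ := (univ.filter
      (fun h : Fin n → Fin n => ∀ x, ∃ y, y ≠ x ∧ h y = h x)).card with hNdef
  have hid : (N : ℤ) = ∑ a ∈ range (n + 1), f a := identity_lemma n
  have hrefl : ∑ a ∈ range (n + 1), f a = ∑ k ∈ range (n + 1), f (n - k) := by
    have := Finset.sum_range_reflect f (n + 1)
    simp only [Nat.add_sub_cancel] at this
    exact this.symm
  have hsplit : range (n + 1) = insert 0 (Icc 1 n) := range_split n
  have h0 : f (n - 0) = (-1 : ℤ) ^ n * (n.factorial : ℤ) := by
    simp [hfdef, Nat.choose_self, Nat.descFactorial_self]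
  have hterm : ∀ k ∈ Icc 1 n, f (n - k)
      = (n : ℤ) * ((-1 : ℤ) ^ (n - k) * (n.choose k) *
        (((n - 1).factorial / (k - 1).factorial : ℕ) : ℤ) * (k : ℤ) ^ (k - 1)) := by
    intro k hk
    rw [mem_Icc] at hk
    rw [hfdef]
    dsimp only
    rw [term_eq n k hk.1 hk.2]
    push_cast
    ring
  have hsum : (N : ℤ) = (-1 : ℤ) ^ n * (n.factorial : ℤ) + (n : ℤ) * S := by
    rw [hid, hrefl, hsplit, Finset.sum_insert (by simp), h0, hSdef, Finset.mul_sum]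
    congr 1
    exact Finset.sum_congr rfl hterm
  have hmain : 0 ≤ (n : ℤ) * S := by
    rcases Nat.even_or_odd n with he | ho
    · obtain ⟨m, hm⟩ := he
      have hN : (n.factorial : ℕ) ≤ N := by
        rw [hNdef]
        subst hm
        exact even_lower m
      have : (-1 : ℤ) ^ n = 1 := Even.neg_one_pow ⟨m, hm⟩
      rw [this, one_mul] at hsum
      have : (n.factorial : ℤ) ≤ (N : ℤ) := by exact_mod_cast hN
      linarith
    · have : (-1 : ℤ) ^ n = -1 := Odd.neg_one_pow ho
      rw [this] at hsum
      have h1 : (0 : ℤ) ≤ (N : ℤ) := Int.natCast_nonneg N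
      have h2 : (0 : ℤ) ≤ (n.factorial : ℤ) := Int.natCast_nonneg _
      linarith
  by_contra hneg
  push_neg at hneg
  have hnpos : (0 : ℤ) < (n : ℤ) := by exact_mod_cast hn
  nlinarith
end

section
/- The number of rooted labeled trees on a k-element vertex set is k^{k-1}. -/
namespace CayleyAux

open Function SimpleGraph

variable {S : Type} [Fintype S] [LinearOrder S] [DecidableEq S]

/-- A "tree function" with root `r`: `r` is fixed and every point eventually iterates to `r`. -/
def IsTF (r : S) (f : S → S) : Prop := f r = r ∧ ∀ x, ∃ n, f^[n] x = r

open Classical in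
/-- height: the least `n` with `f^[n] x = r`. -/
noncomputable def ht (f : S → S) (r x : S) : ℕ :=
  if h : ∃ n, f^[n] x = r then Nat.find h else 0

variable {f : S → S} {r : S}

lemma ht_basic {x : S} (h : ∃ n, f^[n] x = r) :
    f^[ht f r x] x = r ∧ ∀ i < ht f r x, f^[i] x ≠ r := by
  unfold ht
  rw [dif_pos h]
  exact ⟨Nat.find_spec h, fun i hi => Nat.find_min h hi⟩

lemma ht_spec (hf : IsTF r f) (x : S) : f^[ht f r x] x = r := (ht_basic (hf.2 x)).1

lemma ht_min (hf : IsTF r f) {x : S} {i : ℕ} (hi : i < ht f r x) : f^[i] x ≠ r :=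
  (ht_basic (hf.2 x)).2 i hi

lemma ht_eq_of {x : S} {m : ℕ} (hm : f^[m] x = r)
    (hmin : ∀ i < m, f^[i] x ≠ r) : ht f r x = m := by
  have h : ∃ n, f^[n] x = r := ⟨m, hm⟩
  obtain ⟨h1, h2⟩ := ht_basic (f := f) (r := r) h
  rcases lt_trichotomy (ht f r x) m with hlt | he | hgt
  · exact absurd h1 (hmin _ hlt)
  · exact he
  · exact absurd hm (h2 _ hgt)

lemma ht_r (hf : IsTF r f) : ht f r r = 0 :=
  ht_eq_of (by simp) (by simp)

lemma ht_pos (hf : IsTF r f) {x : S} (hx : x ≠ r) : 0 < ht f r x := by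
  rcases Nat.eq_zero_or_pos (ht f r x) with h | h
  · exact absurd (by simpa [h] using ht_spec hf x) hx
  · exact h

lemma ht_apply (hf : IsTF r f) {x : S} (hx : x ≠ r) : ht f r (f x) + 1 = ht f r x := by
  have h1 : f^[ht f r x - 1] (f x) = r := by
    rw [← Function.iterate_succ_apply, Nat.succ_eq_add_one, Nat.sub_add_cancel (ht_pos hf hx)]
    exact ht_spec hf x
  have h2 : ht f r (f x) = ht f r x - 1 := by
    refine ht_eq_of h1 (fun i hi hir => ?_)
    have hir' : f^[i+1] x = r := by rwa [Function.iterate_succ_apply]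
    exact ht_min hf (x := x) (by omega) hir'
  have := ht_pos hf hx
  omega

lemma ht_apply_lt (hf : IsTF r f) {x : S} (hx : x ≠ r) : ht f r (f x) < ht f r x := by
  have := ht_apply hf hx; omega

omit [Fintype S] [LinearOrder S] [DecidableEq S] in
lemma apply_ne (hf : IsTF r f) {x : S} (hx : x ≠ r) : f x ≠ x := by
  intro h
  obtain ⟨n, hn⟩ := hf.2 x
  have hm : ∀ m, f^[m] x = x := by
    intro m; induction m with
    | zero => rfl
    | succ m ih => rw [Function.iterate_succ_apply', ih, h]
  rw [hm n] at hn
  exact hx hn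

/-- The graph of a tree function: edges between `x` and `f x`. -/
def TG (f : S → S) : SimpleGraph S where
  Adj x y := x ≠ y ∧ (f x = y ∨ f y = x)
  symm := by constructor; intro x y h; exact ⟨h.1.symm, h.2.symm⟩
  loopless := by constructor; intro x h; exact h.1 rfl

omit [Fintype S] [LinearOrder S] [DecidableEq S] in
lemma tg_adj_apply (hf : IsTF r f) {x : S} (hx : x ≠ r) : (TG f).Adj x (f x) :=
  ⟨(apply_ne hf hx).symm, Or.inl rfl⟩

lemma tg_second (hf : IsTF r f) {x y : S} (hadj : (TG f).Adj x y)
    (hle : ht f r y ≤ ht f r x) (hx : x ≠ r) : y = f x := by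
  rcases hadj.2 with h | h
  · exact h.symm
  · exfalso
    rcases eq_or_ne y r with rfl | hy
    · exact hx (by rw [← h, hf.1])
    · have h2 := ht_apply_lt hf hy
      rw [h] at h2
      omega

omit [Fintype S] [LinearOrder S] [DecidableEq S] in
lemma tg_reachable (hf : IsTF r f) (x : S) : (TG f).Reachable x r := by
  obtain ⟨n, hn⟩ := hf.2 x
  induction n generalizing x with
  | zero =>
    rw [Function.iterate_zero_apply] at hn
    subst hn
    exact Reachable.refl _
  | succ n ih =>
    rcases eq_or_ne x r with rfl | hx
    · exact Reachable.refl _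
    · exact ((tg_adj_apply hf hx).reachable).trans
        (ih (f x) (by rwa [← Function.iterate_succ_apply]))

lemma tg_path_exists (hf : IsTF r f) (x : S) :
    ∃ w : (TG f).Walk x r, w.IsPath ∧ (∀ y ∈ w.support, ht f r y ≤ ht f r x) ∧
      (x ≠ r → w.getVert 1 = f x) := by
  generalize hn : ht f r x = n
  induction n using Nat.strong_induction_on generalizing x with
  | _ n ih =>
    rcases eq_or_ne x r with rfl | hx
    · refine ⟨SimpleGraph.Walk.nil, by simp, ?_, fun h => absurd rfl h⟩
      intro y hy
      simp only [SimpleGraph.Walk.support_nil, List.mem_singleton] at hy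
      subst hy
      omega
    · obtain ⟨w', hw'p, hw's, _⟩ := ih (ht f r (f x)) (hn ▸ ht_apply_lt hf hx) (f x) rfl
      have hlt := ht_apply_lt hf hx
      refine ⟨SimpleGraph.Walk.cons (tg_adj_apply hf hx) w', ?_, ?_, fun _ => ?_⟩
      · rw [SimpleGraph.Walk.cons_isPath_iff]
        refine ⟨hw'p, fun hmem => ?_⟩
        have := hw's x hmem
        omega
      · intro y hy
        rw [SimpleGraph.Walk.support_cons] at hy
        rcases List.mem_cons.mp hy with rfl | h
        · omega
        · have h2 := hw's y h
          omega
      · rw [show (1:ℕ) = 0 + 1 from rfl, SimpleGraph.Walk.getVert_cons_succ,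
          SimpleGraph.Walk.getVert_zero]

lemma tg_isTree (hf : IsTF r f) : (TG f).IsTree := by
  constructor
  · have : Nonempty S := ⟨r⟩
    exact ⟨fun x y => (tg_reachable hf x).trans (tg_reachable hf y).symm⟩
  · -- acyclic
    intro v c hc
    obtain ⟨x, hxmem, hxmax⟩ : ∃ x ∈ c.support, ∀ y ∈ c.support, ht f r y ≤ ht f r x := by
      obtain ⟨x, hx1, hx2⟩ := (c.support.toFinset).exists_max_image (ht f r)
        ⟨v, List.mem_toFinset.mpr c.start_mem_support⟩
      exact ⟨x, by simpa using hx1, fun y hy => hx2 y (by simpa using hy)⟩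
    have hd : ((c.rotate x hxmem).IsCycle) := hc.rotate hxmem
    generalize hdd : c.rotate x hxmem = d at hd
    have hdsup : ∀ y ∈ d.support, ht f r y ≤ ht f r x := by
      intro y hy
      apply hxmax
      have hperm := SimpleGraph.Walk.support_rotate c x hxmem
      rw [hdd] at hperm
      rw [SimpleGraph.Walk.support_eq_cons d] at hy
      rcases List.mem_cons.mp hy with rfl | h
      · exact hxmem
      · exact List.mem_of_mem_tail (hperm.mem_iff.mp h)
    have h3 := hd.three_le_length
    -- x ≠ r
    have hxr : x ≠ r := by
      intro hxeq
      have hadj : (TG f).Adj (d.getVert 0) (d.getVert 1) := d.adj_getVert_succ (by omega)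
      rw [d.getVert_zero] at hadj
      have hmem : d.getVert 1 ∈ d.support :=
        SimpleGraph.Walk.mem_support_iff_exists_getVert.mpr ⟨1, rfl, by omega⟩
      have hh0 : ht f r (d.getVert 1) = 0 := by
        have h1 := hdsup _ hmem
        have h0 : ht f r x = 0 := by rw [hxeq]; exact ht_r hf
        omega
      have hr1 : d.getVert 1 = r := by
        have := ht_spec hf (d.getVert 1)
        rwa [hh0] at this
      exact hadj.1 (by rw [hr1, hxeq])
    -- decompose d = cons hb q
    obtain ⟨b, hb, q, hq⟩ := SimpleGraph.Walk.not_nil_iff.mp hd.not_nil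
    have hbfx : b = f x := by
      refine tg_second hf hb ?_ hxr
      apply hdsup
      rw [hq]
      simp [SimpleGraph.Walk.support_cons]
    -- q is a path from b to x
    have hqpath : q.IsPath := by
      have h2 := hd
      rw [hq, SimpleGraph.Walk.isCycle_def] at h2
      rw [SimpleGraph.Walk.isPath_def]
      have := h2.2.2
      rwa [SimpleGraph.Walk.support_cons, List.tail_cons] at this
    have hxb : x ≠ b := hb.ne
    obtain ⟨cc, hcc, q2, hq2⟩ := SimpleGraph.Walk.exists_eq_cons_of_ne hxb q.reverse
    have hccfx : cc = f x := by
      refine tg_second hf hcc ?_ hxr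
      apply hdsup
      have hmem : cc ∈ q.reverse.support := by rw [hq2]; simp [SimpleGraph.Walk.support_cons]
      rw [SimpleGraph.Walk.support_reverse] at hmem
      rw [hq]
      rw [SimpleGraph.Walk.support_cons]
      exact List.mem_cons_of_mem _ (List.mem_reverse.mp hmem)
    have hbcc : cc = b := by rw [hccfx, hbfx]
    subst hbcc
    have hq2path : q2.IsPath := by
      have hrev : q.reverse.IsPath := hqpath.reverse
      rw [hq2, SimpleGraph.Walk.cons_isPath_iff] at hrev
      exact hrev.1
    have hq2nil : q2.length = 0 := by
      cases q2 with
      | nil => rfl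
      | cons h q3 =>
        exfalso
        rw [SimpleGraph.Walk.cons_isPath_iff] at hq2path
        exact hq2path.2 (SimpleGraph.Walk.end_mem_support q3)
    have hl : q.reverse.length = 1 := by
      rw [hq2, SimpleGraph.Walk.length_cons, hq2nil]
    have hdl : d.length = 2 := by
      rw [hq, SimpleGraph.Walk.length_cons]
      rw [SimpleGraph.Walk.length_reverse] at hl
      omega
    omega

section GraphToFun

variable {G : SimpleGraph S}

noncomputable def pathTo (hG : G.IsTree) (r x : S) : G.Walk x r :=
  (hG.existsUnique_path x r).choose

omit [Fintype S] [LinearOrder S] [DecidableEq S] in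
lemma pathTo_isPath (hG : G.IsTree) (r x : S) : (pathTo hG r x).IsPath :=
  (hG.existsUnique_path x r).choose_spec.1

omit [Fintype S] [LinearOrder S] [DecidableEq S] in
lemma pathTo_unique (hG : G.IsTree) {r x : S} {q : G.Walk x r} (hq : q.IsPath) :
    q = pathTo hG r x :=
  (hG.existsUnique_path x r).choose_spec.2 q hq

noncomputable def gf (hG : G.IsTree) (r : S) : S → S := fun x => (pathTo hG r x).getVert 1

omit [Fintype S] [LinearOrder S] [DecidableEq S] in
lemma pathTo_self (hG : G.IsTree) (r : S) : pathTo hG r r = SimpleGraph.Walk.nil :=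
  (pathTo_unique hG SimpleGraph.Walk.IsPath.nil).symm

omit [Fintype S] [LinearOrder S] [DecidableEq S] in
lemma gf_root (hG : G.IsTree) (r : S) : gf hG r r = r := by
  rw [gf, pathTo_self]
  rfl

omit [Fintype S] [LinearOrder S] [DecidableEq S] in
lemma pathTo_cons (hG : G.IsTree) (r : S) {x : S} (hx : x ≠ r) :
    ∃ (y : S) (ha : G.Adj x y), gf hG r x = y ∧
      pathTo hG r x = SimpleGraph.Walk.cons ha (pathTo hG r y) := by
  obtain ⟨y, ha, q, hq⟩ := SimpleGraph.Walk.exists_eq_cons_of_ne hx (pathTo hG r x)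
  have hq' : q.IsPath := by
    have h2 := pathTo_isPath hG r x
    rw [hq, SimpleGraph.Walk.cons_isPath_iff] at h2
    exact h2.1
  have hqq : q = pathTo hG r y := pathTo_unique hG hq'
  rw [hqq] at hq
  refine ⟨y, ha, ?_, hq⟩
  rw [gf, hq, show (1:ℕ) = 0 + 1 from rfl, SimpleGraph.Walk.getVert_cons_succ,
    SimpleGraph.Walk.getVert_zero]

omit [Fintype S] [LinearOrder S] [DecidableEq S] in
lemma gf_adj (hG : G.IsTree) (r : S) {x : S} (hx : x ≠ r) : G.Adj x (gf hG r x) := by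
  obtain ⟨y, ha, h1, _⟩ := pathTo_cons hG r hx
  rwa [h1]

omit [Fintype S] [LinearOrder S] [DecidableEq S] in
lemma gf_length (hG : G.IsTree) (r : S) {x : S} (hx : x ≠ r) :
    (pathTo hG r x).length = (pathTo hG r (gf hG r x)).length + 1 := by
  obtain ⟨y, ha, h1, h2⟩ := pathTo_cons hG r hx
  rw [h1, h2, SimpleGraph.Walk.length_cons]

omit [Fintype S] [LinearOrder S] [DecidableEq S] in
lemma gf_istf (hG : G.IsTree) (r : S) : IsTF r (gf hG r) := by
  refine ⟨gf_root hG r, fun x => ?_⟩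
  generalize hn : (pathTo hG r x).length = n
  induction n using Nat.strong_induction_on generalizing x with
  | _ n ih =>
    rcases eq_or_ne x r with rfl | hx
    · exact ⟨0, rfl⟩
    · have hl := gf_length hG r hx
      obtain ⟨m, hm⟩ := ih ((pathTo hG r (gf hG r x)).length) (by omega) _ rfl
      exact ⟨m + 1, by rw [Function.iterate_succ_apply]; exact hm⟩

omit [Fintype S] [LinearOrder S] in
lemma TG_gf (hG : G.IsTree) (r : S) : TG (gf hG r) = G := by
  ext x y
  constructor
  · rintro ⟨hne, h | h⟩
    · have hx : x ≠ r := by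
        intro hxe
        rw [hxe, gf_root hG r] at h
        exact hne (hxe.trans h)
      have := gf_adj hG r hx
      rwa [h] at this
    · have hy : y ≠ r := by
        intro hye
        rw [hye, gf_root hG r] at h
        exact hne (h.symm.trans hye.symm)
      exact ((h ▸ gf_adj hG r hy : G.Adj y x)).symm
  · intro hadj
    refine ⟨hadj.ne, ?_⟩
    by_cases hmem : x ∈ (pathTo hG r y).support
    · -- show f y = x; first y ∉ support (pathTo x)
      have hymem : y ∉ (pathTo hG r x).support := by
        intro hymem
        have e1 := SimpleGraph.Walk.take_spec (pathTo hG r y) hmem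
        have e2 := SimpleGraph.Walk.take_spec (pathTo hG r x) hymem
        have d1 : ((pathTo hG r y).dropUntil x hmem) = pathTo hG r x :=
          pathTo_unique hG ((pathTo_isPath hG r y).dropUntil hmem)
        have d2 : ((pathTo hG r x).dropUntil y hymem) = pathTo hG r y :=
          pathTo_unique hG ((pathTo_isPath hG r x).dropUntil hymem)
        have l1 := congrArg SimpleGraph.Walk.length e1
        have l2 := congrArg SimpleGraph.Walk.length e2
        rw [SimpleGraph.Walk.length_append, d1] at l1
        rw [SimpleGraph.Walk.length_append, d2] at l2
        have t1 : ((pathTo hG r y).takeUntil x hmem).length ≠ 0 := fun h0 =>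
          hadj.ne (SimpleGraph.Walk.eq_of_length_eq_zero h0).symm
        have t2 : ((pathTo hG r x).takeUntil y hymem).length ≠ 0 := fun h0 =>
          hadj.ne (SimpleGraph.Walk.eq_of_length_eq_zero h0)
        omega
      right
      have hpath : (SimpleGraph.Walk.cons hadj.symm (pathTo hG r x)).IsPath := by
        rw [SimpleGraph.Walk.cons_isPath_iff]
        exact ⟨pathTo_isPath hG r x, hymem⟩
      have := pathTo_unique hG hpath
      rw [gf, ← this, show (1:ℕ) = 0 + 1 from rfl, SimpleGraph.Walk.getVert_cons_succ,
        SimpleGraph.Walk.getVert_zero]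
    · left
      have hpath : (SimpleGraph.Walk.cons hadj (pathTo hG r y)).IsPath := by
        rw [SimpleGraph.Walk.cons_isPath_iff]
        exact ⟨pathTo_isPath hG r y, hmem⟩
      have := pathTo_unique hG hpath
      rw [gf, ← this, show (1:ℕ) = 0 + 1 from rfl, SimpleGraph.Walk.getVert_cons_succ,
        SimpleGraph.Walk.getVert_zero]

lemma gf_TG (hf : IsTF r f) : gf (tg_isTree hf) r = f := by
  funext x
  rcases eq_or_ne x r with rfl | hx
  · rw [gf_root, hf.1]
  · obtain ⟨w, hwp, _, hw1⟩ := tg_path_exists hf x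
    have := pathTo_unique (tg_isTree hf) hwp
    rw [gf, ← this]
    exact hw1 hx

end GraphToFun

/-- The equivalence between rooted trees and tree functions. -/
noncomputable def equivB :
    {p : S × SimpleGraph S // p.2.IsTree} ≃ {q : S × (S → S) // IsTF q.1 q.2} where
  toFun p := ⟨(p.1.1, gf p.2 p.1.1), gf_istf p.2 p.1.1⟩
  invFun q := ⟨(q.1.1, TG q.1.2), tg_isTree q.2⟩
  left_inv := by
    rintro ⟨⟨r, G⟩, hG⟩
    exact Subtype.ext (Prod.ext rfl (TG_gf hG r))
  right_inv := by
    rintro ⟨⟨r, f⟩, hf⟩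
    exact Subtype.ext (Prod.ext rfl (gf_TG hf))

section Joyal

/-! ### Joyal's bijection: tree functions with a marked point ≃ endofunctions -/

variable (f) (a : S)

/-- The spine: the orbit of `a` down to the root. -/
noncomputable def spine (f : S → S) (r a : S) : List S :=
  (List.range (ht f r a + 1)).map (fun i => f^[i] a)

lemma spine_length : (spine f r a).length = ht f r a + 1 := by simp [spine]

lemma spine_getElem {i : ℕ} (h : i < (spine f r a).length) : (spine f r a)[i] = f^[i] a := by
  simp only [spine, List.getElem_map, List.getElem_range]

lemma spine_iter_ne (hf : IsTF r f) {i j : ℕ} (hij : i < j) (hj : j ≤ ht f r a)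
    (he : f^[i] a = f^[j] a) : False := by
  have h2 : f^[ht f r a - j] (f^[j] a) = r := by
    rw [← Function.iterate_add_apply, Nat.sub_add_cancel hj]
    exact ht_spec hf a
  rw [← he, ← Function.iterate_add_apply] at h2
  exact ht_min hf (x := a) (by omega) h2

lemma spine_nodup (hf : IsTF r f) : (spine f r a).Nodup := by
  refine List.Nodup.map_on ?_ List.nodup_range
  intro i hi j hj hij
  rw [List.mem_range] at hi hj
  rcases lt_trichotomy i j with h | h | h
  · exact (spine_iter_ne f a hf h (by omega) hij).elim
  · exact h
  · exact (spine_iter_ne f a hf h (by omega) hij.symm).elim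

lemma spine_zero : ∃ h : 0 < (spine f r a).length, (spine f r a)[0] = a := by
  refine ⟨by rw [spine_length]; omega, ?_⟩
  rw [spine_getElem]
  rfl

lemma spine_last (hf : IsTF r f) :
    (spine f r a)[ht f r a]'(by rw [spine_length]; omega) = r := by
  rw [spine_getElem]
  exact ht_spec hf a

lemma spine_card (hf : IsTF r f) :
    (spine f r a).toFinset.card = (spine f r a).length :=
  List.toFinset_card_of_nodup (spine_nodup f a hf)

/-- The sorted list of the spine's vertex set. -/
noncomputable def sortL (f : S → S) (r a : S) : List S :=
  (spine f r a).toFinset.sort (· ≤ ·)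

lemma sortL_length (hf : IsTF r f) : (sortL f r a).length = (spine f r a).length := by
  rw [sortL, Finset.length_sort]
  exact spine_card f a hf

lemma mem_sortL_iff {x : S} : x ∈ sortL f r a ↔ x ∈ (spine f r a).toFinset :=
  Finset.mem_sort (· ≤ ·)

lemma mem_sortL {x : S} (hx : x ∈ (spine f r a).toFinset) :
    ∃ (i : ℕ) (hi : i < (sortL f r a).length), (sortL f r a)[i] = x :=
  List.mem_iff_getElem.mp ((Finset.mem_sort (· ≤ ·)).mpr hx)

/-- Joyal's forward map: given a tree function with root `r` and a marked point `a`,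
produce an arbitrary endofunction. -/
noncomputable def fwd (f : S → S) (r a : S) : S → S := fun x =>
  if x ∈ (spine f r a).toFinset then
    (spine f r a).getD ((sortL f r a).idxOf x) x
  else f x

lemma fwd_off {x : S} (hx : x ∉ (spine f r a).toFinset) : fwd f r a x = f x := by
  rw [fwd, if_neg hx]

lemma fwd_sort_getElem (hf : IsTF r f) {i : ℕ} (hi : i < (sortL f r a).length) :
    fwd f r a ((sortL f r a)[i]) = (spine f r a)[i]'(by rwa [← sortL_length f a hf]) := by
  have hmem : (sortL f r a)[i] ∈ (spine f r a).toFinset := by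
    rw [← Finset.mem_sort (· ≤ ·)]
    exact List.getElem_mem hi
  rw [fwd, if_pos hmem]
  have hnd : (sortL f r a).Nodup := Finset.sort_nodup _ _
  rw [List.Nodup.idxOf_getElem hnd i hi]
  rw [List.getD_eq_getElem _ _ (by rwa [← sortL_length f a hf])]

lemma fwd_maps (hf : IsTF r f) {x : S} (hx : x ∈ (spine f r a).toFinset) :
    fwd f r a x ∈ (spine f r a).toFinset := by
  obtain ⟨i, hi, he⟩ := mem_sortL f a hx
  rw [← he, fwd_sort_getElem f a hf hi]
  rw [List.mem_toFinset]
  exact List.getElem_mem _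

lemma fwd_injOn (hf : IsTF r f) {x y : S} (hx : x ∈ (spine f r a).toFinset)
    (hy : y ∈ (spine f r a).toFinset) (he : fwd f r a x = fwd f r a y) : x = y := by
  obtain ⟨i, hi, hei⟩ := mem_sortL f a hx
  obtain ⟨j, hj, hej⟩ := mem_sortL f a hy
  rw [← hei, ← hej] at he ⊢
  rw [fwd_sort_getElem f a hf hi, fwd_sort_getElem f a hf hj] at he
  have h1 := List.Nodup.idxOf_getElem (spine_nodup f a hf) i (by rwa [← sortL_length f a hf])
  have h2 := List.Nodup.idxOf_getElem (spine_nodup f a hf) j (by rwa [← sortL_length f a hf])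
  rw [he] at h1
  have hij : i = j := h1.symm.trans h2
  subst hij
  rfl

lemma exists_iterate_periodic (g : S → S) (x : S) : ∃ n, g^[n] x ∈ Function.periodicPts g := by
  obtain ⟨i, j, hne, he⟩ := Fintype.exists_ne_map_eq_of_card_lt
    (fun i : Fin (Fintype.card S + 1) => g^[(i : ℕ)] x) (by simp)
  have hne' : (i : ℕ) ≠ (j : ℕ) := fun h => hne (Fin.ext h)
  rcases hne'.lt_or_gt with h | h
  · refine ⟨i, Function.mk_mem_periodicPts (n := (j : ℕ) - i) (by omega) ?_⟩
    show g^[(j : ℕ) - i] (g^[(i : ℕ)] x) = g^[(i : ℕ)] x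
    rw [← Function.iterate_add_apply, Nat.sub_add_cancel h.le]
    exact he.symm
  · refine ⟨j, Function.mk_mem_periodicPts (n := (i : ℕ) - j) (by omega) ?_⟩
    show g^[(i : ℕ) - j] (g^[(j : ℕ)] x) = g^[(j : ℕ)] x
    rw [← Function.iterate_add_apply, Nat.sub_add_cancel h.le]
    exact he

lemma mem_periodic_of_invariant (M : Finset S) (g : S → S) (hmap : ∀ x ∈ M, g x ∈ M)
    (hinj : ∀ x ∈ M, ∀ y ∈ M, g x = g y → x = y) {x : S} (hx : x ∈ M) :
    x ∈ Function.periodicPts g := by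
  have hit : ∀ n, ∀ y ∈ M, g^[n] y ∈ M := by
    intro n
    induction n with
    | zero => exact fun y hy => hy
    | succ n ih => intro y hy; rw [Function.iterate_succ_apply]; exact ih _ (hmap _ hy)
  have hitinj : ∀ n, ∀ y ∈ M, ∀ z ∈ M, g^[n] y = g^[n] z → y = z := by
    intro n
    induction n with
    | zero => exact fun y _ z _ h => h
    | succ n ih =>
      intro y hy z hz h
      rw [Function.iterate_succ_apply, Function.iterate_succ_apply] at h
      exact hinj _ hy _ hz (ih _ (hmap _ hy) _ (hmap _ hz) h)
  obtain ⟨n, hn⟩ := exists_iterate_periodic g x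
  obtain ⟨m, hm, hper⟩ := Function.mem_periodicPts.mp hn
  refine Function.mk_mem_periodicPts hm ?_
  show g^[m] x = x
  refine hitinj n _ (hit _ _ hx) _ hx ?_
  show g^[n] (g^[m] x) = g^[n] x
  rw [← Function.iterate_add_apply, Nat.add_comm, Function.iterate_add_apply]
  exact hper

lemma periodic_fwd (hf : IsTF r f) :
    Function.periodicPts (fwd f r a) = ↑(spine f r a).toFinset := by
  apply Set.eq_of_subset_of_subset
  · intro x hx
    by_contra hxM
    rw [Finset.mem_coe] at hxM
    -- x periodic but off the spine set M
    obtain ⟨m, hm, hper⟩ := Function.mem_periodicPts.mp hx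
    -- iterates of x never meet M
    have hnever : ∀ i, (fwd f r a)^[i] x ∉ (spine f r a).toFinset := by
      intro i hi
      -- once in M, stays in M
      have hstay : ∀ j, (fwd f r a)^[i + j] x ∈ (spine f r a).toFinset := by
        intro j
        induction j with
        | zero => exact hi
        | succ j ih =>
          rw [show i + (j+1) = (i + j) + 1 by omega, Function.iterate_succ_apply']
          exact fwd_maps f a hf ih
      have hret : (fwd f r a)^[m * (i + 1)] x = x := hper.mul_const (i + 1)
      have hge : i ≤ m * (i + 1) := by nlinarith
      have := hstay (m * (i + 1) - i)
      rw [show i + (m * (i + 1) - i) = m * (i + 1) by omega, hret] at this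
      exact hxM this
    have hsame : ∀ i, (fwd f r a)^[i] x = f^[i] x := by
      intro i
      induction i with
      | zero => rfl
      | succ i ih =>
        rw [Function.iterate_succ_apply', Function.iterate_succ_apply', ih,
          fwd_off f a (ih ▸ hnever i)]
    obtain ⟨n, hn⟩ := hf.2 x
    have hr : r ∈ (spine f r a).toFinset := by
      rw [List.mem_toFinset]
      exact List.mem_iff_getElem.mpr ⟨ht f r a, by rw [spine_length]; omega, spine_last f a hf⟩
    have := hnever n
    rw [hsame n, hn] at this
    exact this hr
  · intro x hx
    exact mem_periodic_of_invariant _ _ (fun y hy => fwd_maps f a hf hy)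
      (fun y hy z hz h => fwd_injOn f a hf hy hz h) (Finset.mem_coe.mp hx)

/-! ### The backward map -/

/-- The finset of periodic points. -/
noncomputable def bwdP (g : S → S) : Finset S :=
  (Set.toFinite (Function.periodicPts g)).toFinset

lemma mem_bwdP {g : S → S} {x : S} : x ∈ bwdP g ↔ x ∈ Function.periodicPts g :=
  Set.Finite.mem_toFinset _

/-- The sorted list of periodic points. -/
noncomputable def sortP (g : S → S) : List S := (bwdP g).sort (· ≤ ·)

lemma mem_sortP_iff (g : S → S) {x : S} : x ∈ sortP g ↔ x ∈ bwdP g :=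
  Finset.mem_sort (· ≤ ·)

lemma mem_sortP (g : S → S) {x : S} (hx : x ∈ bwdP g) :
    ∃ (i : ℕ) (hi : i < (sortP g).length), (sortP g)[i] = x :=
  List.mem_iff_getElem.mp ((Finset.mem_sort (· ≤ ·)).mpr hx)

/-- The image list of the sorted periodic points. -/
noncomputable def bwdL (g : S → S) : List S := (sortP g).map g

lemma bwdL_def (g : S → S) : bwdL g = (sortP g).map g := rfl

lemma sortP_nodup (g : S → S) : (sortP g).Nodup := Finset.sort_nodup _ _

lemma bwdL_getElem (g : S → S) {j : ℕ} (hj : j < (sortP g).length) :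
    (bwdL g)[j]'(by rw [bwdL_def, List.length_map]; exact hj) = g ((sortP g)[j]) := by
  simp [bwdL_def]

variable [Nonempty S]

noncomputable def dflt : S := Classical.arbitrary S

/-- The root recovered from an endofunction. -/
noncomputable def bwdr (g : S → S) : S := (bwdL g).getD ((bwdL g).length - 1) dflt

/-- The marked point recovered from an endofunction. -/
noncomputable def bwda (g : S → S) : S := (bwdL g).getD 0 dflt

/-- The tree function recovered from an endofunction. -/
noncomputable def bwdf (g : S → S) : S → S := fun x =>
  if x ∈ bwdP g then (bwdL g).getD ((bwdL g).idxOf x + 1) x else g x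

variable (g : S → S)

lemma bwdP_nonempty : (bwdP g).Nonempty := by
  obtain ⟨n, hn⟩ := exists_iterate_periodic g (Classical.arbitrary S)
  exact ⟨_, mem_bwdP.mpr hn⟩

lemma sortP_length_pos : 0 < (sortP g).length := by
  rw [sortP, Finset.length_sort]
  exact Finset.card_pos.mpr (bwdP_nonempty g)

lemma bwdL_nodup : (bwdL g).Nodup := by
  refine List.Nodup.map_on ?_ (Finset.sort_nodup _ _)
  intro x hx y hy hxy
  rw [mem_sortP_iff] at hx hy
  exact (Function.bijOn_periodicPts (f := g)).injOn (mem_bwdP.mp hx) (mem_bwdP.mp hy) hxy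

lemma bwdL_mem {y : S} : y ∈ bwdL g ↔ y ∈ bwdP g := by
  constructor
  · intro hy
    obtain ⟨x, hx, he⟩ := List.mem_map.mp hy
    rw [mem_sortP_iff] at hx
    rw [← he, mem_bwdP]
    exact (Function.bijOn_periodicPts (f := g)).mapsTo (mem_bwdP.mp hx)
  · intro hy
    obtain ⟨x, hx, he⟩ := (Function.bijOn_periodicPts (f := g)).surjOn (mem_bwdP.mp hy)
    rw [bwdL, List.mem_map]
    exact ⟨x, (mem_sortP_iff g).mpr (mem_bwdP.mpr hx), he⟩

lemma bwdL_length_pos : 0 < (bwdL g).length := by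
  rw [bwdL, List.length_map]
  exact sortP_length_pos g

lemma bwdr_eq : bwdr g = (bwdL g)[(bwdL g).length - 1]'(by have := bwdL_length_pos g; omega) := by
  rw [bwdr, List.getD_eq_getElem]

lemma bwda_eq : bwda g = (bwdL g)[0]'(bwdL_length_pos g) := by
  rw [bwda, List.getD_eq_getElem]

lemma bwdf_chain {i : ℕ} (hi : i + 1 < (bwdL g).length) :
    bwdf g ((bwdL g)[i]'(by omega)) = (bwdL g)[i + 1] := by
  have hmem : (bwdL g)[i]'(by omega) ∈ bwdP g := (bwdL_mem g).mp (List.getElem_mem _)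
  rw [bwdf, if_pos hmem, List.Nodup.idxOf_getElem (bwdL_nodup g) i (by omega),
    List.getD_eq_getElem _ _ hi]

lemma bwdf_root : bwdf g (bwdr g) = bwdr g := by
  have hlen := bwdL_length_pos g
  rw [bwdr_eq]
  have hmem : (bwdL g)[(bwdL g).length - 1]'(by omega) ∈ bwdP g :=
    (bwdL_mem g).mp (List.getElem_mem _)
  rw [bwdf, if_pos hmem, List.Nodup.idxOf_getElem (bwdL_nodup g) _ (by omega),
    List.getD_eq_default _ _ (by omega)]

lemma bwdf_off {x : S} (hx : x ∉ bwdP g) : bwdf g x = g x := by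
  rw [bwdf, if_neg hx]

lemma bwdf_reach_chain : ∀ (d i : ℕ) (hi : i < (bwdL g).length),
    i + d = (bwdL g).length - 1 → (bwdf g)^[d] ((bwdL g)[i]) = bwdr g := by
  intro d
  induction d with
  | zero =>
    intro i hi he
    have hieq : i = (bwdL g).length - 1 := by omega
    subst hieq
    rw [Function.iterate_zero_apply, bwdr_eq]
  | succ d ih =>
    intro i hi he
    rw [Function.iterate_succ_apply, bwdf_chain g (by omega)]
    exact ih (i + 1) (by omega) (by omega)

lemma bwdf_istf : IsTF (bwdr g) (bwdf g) := by
  refine ⟨bwdf_root g, fun x => ?_⟩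
  have hP : ∀ y ∈ bwdP g, ∃ n, (bwdf g)^[n] y = bwdr g := by
    intro y hy
    obtain ⟨i, hi, he⟩ := List.mem_iff_getElem.mp ((bwdL_mem g).mpr hy)
    exact ⟨(bwdL g).length - 1 - i, he ▸ bwdf_reach_chain g _ i hi (by omega)⟩
  by_cases hx : x ∈ bwdP g
  · exact hP x hx
  · obtain ⟨n, hn, hmin⟩ : ∃ n, g^[n] x ∈ bwdP g ∧ ∀ i < n, g^[i] x ∉ bwdP g := by
      have h := exists_iterate_periodic g x
      have h' : ∃ n, g^[n] x ∈ bwdP g := by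
        obtain ⟨n, hn⟩ := h
        exact ⟨n, mem_bwdP.mpr hn⟩
      exact ⟨Nat.find h', Nat.find_spec h', fun i hi => Nat.find_min h' hi⟩
    have hsame : ∀ i ≤ n, (bwdf g)^[i] x = g^[i] x := by
      intro i hi
      induction i with
      | zero => rfl
      | succ i ih =>
        rw [Function.iterate_succ_apply', Function.iterate_succ_apply',
          ih (by omega), bwdf_off g (hmin i (by omega))]
    obtain ⟨m, hm⟩ := hP _ hn
    refine ⟨m + n, ?_⟩
    rw [Function.iterate_add_apply, hsame n le_rfl]
    exact hm

/-! ### The two maps are inverse -/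

lemma bwd_fwd (hf : IsTF r f) :
    bwdr (fwd f r a) = r ∧ bwdf (fwd f r a) = f ∧ bwda (fwd f r a) = a := by
  have hPM : bwdP (fwd f r a) = (spine f r a).toFinset := by
    ext x
    rw [mem_bwdP, periodic_fwd f a hf, Finset.mem_coe]
  have hsort : sortP (fwd f r a) = sortL f r a := by
    rw [sortP, hPM, sortL]
  have hlen : (sortL f r a).length = (spine f r a).length := sortL_length f a hf
  have hL : bwdL (fwd f r a) = spine f r a := by
    refine List.ext_getElem (by rw [bwdL_def, hsort, List.length_map, hlen]) ?_
    intro i h1 h2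
    have h1x : i < (sortL f r a).length := by
      rwa [bwdL_def, hsort, List.length_map] at h1
    rw [bwdL_getElem _ (by rwa [hsort] : i < (sortP (fwd f r a)).length)]
    rw [List.getElem_of_eq hsort]
    exact fwd_sort_getElem f a hf h1x
  have hslen : (spine f r a).length = ht f r a + 1 := spine_length f a
  refine ⟨?_, ?_, ?_⟩
  · show (bwdL (fwd f r a)).getD ((bwdL (fwd f r a)).length - 1) dflt = r
    rw [hL, hslen, Nat.add_sub_cancel, List.getD_eq_getElem _ _ (by omega)]
    exact spine_last f a hf
  · funext x
    by_cases hx : x ∈ (spine f r a).toFinset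
    · obtain ⟨i, hi, he⟩ := List.mem_iff_getElem.mp (List.mem_toFinset.mp hx)
      show (if x ∈ bwdP (fwd f r a) then
          (bwdL (fwd f r a)).getD ((bwdL (fwd f r a)).idxOf x + 1) x else fwd f r a x) = f x
      rw [if_pos (hPM ▸ hx : x ∈ bwdP (fwd f r a)), hL, ← he,
        List.Nodup.idxOf_getElem (spine_nodup f a hf) i hi]
      rcases Nat.lt_or_ge (i + 1) (spine f r a).length with hlt | hge
      · rw [List.getD_eq_getElem _ _ hlt, spine_getElem f a hlt, spine_getElem f a hi,
          Function.iterate_succ_apply']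
      · -- i is the last index: x = r
        have hieq : i = ht f r a := by omega
        rw [List.getD_eq_default _ _ hge, spine_getElem f a hi, hieq, ht_spec hf a, hf.1]
    · show (if x ∈ bwdP (fwd f r a) then
          (bwdL (fwd f r a)).getD ((bwdL (fwd f r a)).idxOf x + 1) x else fwd f r a x) = f x
      rw [if_neg (show x ∉ bwdP (fwd f r a) by rwa [hPM]), fwd_off f a hx]
  · show (bwdL (fwd f r a)).getD 0 dflt = a
    rw [hL, List.getD_eq_getElem _ _ (by rw [hslen]; omega)]
    obtain ⟨h0, he⟩ := spine_zero f a (r := r)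
    exact he

lemma fwd_bwd : fwd (bwdf g) (bwdr g) (bwda g) = g := by
  have hlen := bwdL_length_pos g
  -- iterates of the marked point walk along L
  have hstep : ∀ (i : ℕ) (hi : i < (bwdL g).length), (bwdf g)^[i] (bwda g) = (bwdL g)[i]'hi := by
    intro i
    induction i with
    | zero => intro hi; rw [Function.iterate_zero_apply, bwda_eq]
    | succ i ih =>
      intro hi
      rw [Function.iterate_succ_apply', ih (by omega), bwdf_chain g (i := i) (by omega)]
  have hht : ht (bwdf g) (bwdr g) (bwda g) = (bwdL g).length - 1 := by
    refine ht_eq_of ?_ ?_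
    · rw [hstep _ (by omega), bwdr_eq]
    · intro i hi he
      rw [hstep _ (by omega), bwdr_eq] at he
      have h1 := List.Nodup.idxOf_getElem (bwdL_nodup g) i (by omega)
      have h2 := List.Nodup.idxOf_getElem (bwdL_nodup g) ((bwdL g).length - 1)
        (by omega)
      rw [he] at h1
      have : i = (bwdL g).length - 1 := h1.symm.trans h2
      omega
  have hspine : spine (bwdf g) (bwdr g) (bwda g) = bwdL g := by
    refine List.ext_getElem (by rw [spine_length, hht]; omega) ?_
    intro i h1 h2
    rw [spine_getElem, hstep i (by omega)]
  have hM : (spine (bwdf g) (bwdr g) (bwda g)).toFinset = bwdP g := by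
    ext x
    rw [hspine, List.mem_toFinset, bwdL_mem]
  funext x
  by_cases hx : x ∈ bwdP g
  · obtain ⟨i, hi, he⟩ := List.mem_iff_getElem.mp ((bwdL_mem g).mpr hx)
    show (if x ∈ (spine (bwdf g) (bwdr g) (bwda g)).toFinset then
        (spine (bwdf g) (bwdr g) (bwda g)).getD
          ((sortL (bwdf g) (bwdr g) (bwda g)).idxOf x) x
      else bwdf g x) = g x
    rw [if_pos (hM.symm ▸ hx : x ∈ (spine (bwdf g) (bwdr g) (bwda g)).toFinset)]
    rw [hspine]
    rw [sortL]
    rw [hM]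
    rw [← sortP]
    obtain ⟨j, hj, hej⟩ := mem_sortP g hx
    rw [← hej, List.Nodup.idxOf_getElem (sortP_nodup g) j hj,
      List.getD_eq_getElem _ _ (by rw [bwdL_def, List.length_map]; omega)]
    exact bwdL_getElem g hj
  · rw [fwd_off _ _ (by rwa [hM]), bwdf_off g hx]

/-- Joyal's bijection. -/
noncomputable def equivC : {q : S × (S → S) // IsTF q.1 q.2} × S ≃ (S → S) where
  toFun p := fwd p.1.1.2 p.1.1.1 p.2
  invFun g := ⟨⟨(bwdr g, bwdf g), bwdf_istf g⟩, bwda g⟩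
  left_inv := by
    rintro ⟨⟨⟨r, f⟩, hf⟩, a⟩
    obtain ⟨h1, h2, h3⟩ := bwd_fwd f a hf
    exact Prod.ext (Subtype.ext (Prod.ext h1 h2)) h3
  right_inv := fwd_bwd

end Joyal

end CayleyAux

/-- The number of rooted labeled trees on a `k`-element vertex set is `k^{k-1}`. -/
theorem stmt14 (k : ℕ) (hk : 0 < k) (S : Type) [Fintype S] (hS : Fintype.card S = k) :
    Nat.card {p : S × SimpleGraph S // p.2.IsTree} = k ^ (k - 1) := by
  have hne : Nonempty S := by
    rw [← Fintype.card_pos_iff, hS]; exact hk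
  letI : LinearOrder S := LinearOrder.lift' (Fintype.equivFin S) (Equiv.injective _)
  letI : DecidableEq S := Classical.decEq S
  have h1 : Nat.card {p : S × SimpleGraph S // p.2.IsTree}
      = Nat.card {q : S × (S → S) // CayleyAux.IsTF q.1 q.2} :=
    Nat.card_congr CayleyAux.equivB
  have h2 : Nat.card ({q : S × (S → S) // CayleyAux.IsTF q.1 q.2} × S) = Nat.card (S → S) :=
    Nat.card_congr CayleyAux.equivC
  rw [Nat.card_prod] at h2
  have hcS : Nat.card S = k := by rw [Nat.card_eq_fintype_card, hS]
  have h3 : Nat.card (S → S) = k ^ k := by rw [Nat.card_fun, hcS]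
  rw [hcS, h3] at h2
  have hkk : k ^ k = k ^ (k - 1) * k := by
    rw [← pow_succ]
    congr 1
    omega
  rw [h1]
  apply Nat.eq_of_mul_eq_mul_right hk
  rw [h2, hkk]
end
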